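/- Fix n ≥ 1, a strict partition λ with ℓ(λ) ≤ n, i ∈ [n−1], and T ∈ SetDecTab_n(λ) such that revrow(T) contains at least one i-unpaired letter equal to i. Let (x,y) be the box of T containing the last such i, and assume that changing this i to i+1 does not yield a set-valued decomposition tableau. Then none of the following occurs: (a) 1 < x ≤ y and i+1 ∈ T_{x−1,x−1}; (b) 1 < x ≤ y and some z > y has min(T_{x−1,y}) ≤ i+1 and i+1 ∈ T_{x,z}; (c) 1 < x < y and some z with 1 < z < y has max(T_{x,z}) ≥ i+1 and i+1 ∈ T_{x−1,z}. -/

import Mathlib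

open scoped Classical

/-! ## Shifted diagrams, hook words, decomposition tableaux -/

/-- A strict partition, given as its (strictly decreasing) list of positive parts. -/
def IsStrictPartition (lam : List ℕ) : Prop :=
  lam.Chain' (· > ·) ∧ ∀ p ∈ lam, 0 < p

/-- A partition (weakly decreasing list of positive parts). -/
def IsPartition (lam : List ℕ) : Prop :=
  lam.Chain' (· ≥ ·) ∧ ∀ p ∈ lam, 0 < p

/-- `(i, j)` (1-indexed row `i`, column `j`) is a box of the shifted diagram `SD_lam`. -/
def InSD (lam : List ℕ) (i j : ℕ) : Prop :=
  1 ≤ i ∧ i ≤ lam.length ∧ i ≤ j ∧ j < i + lam.getD (i - 1) 0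

/-- `(i, j)` is a box of the (unshifted) Young diagram of `lam`. -/
def InYD (lam : List ℕ) (i j : ℕ) : Prop :=
  1 ≤ i ∧ i ≤ lam.length ∧ 1 ≤ j ∧ j ≤ lam.getD (i - 1) 0

/-- The word given by row `i` (1-indexed) of a shifted tableau `T`, read left to right. -/
def rowWord (lam : List ℕ) (T : ℕ × ℕ → ℕ) (i : ℕ) : List ℕ :=
  (List.range (lam.getD (i - 1) 0)).map fun j => T (i, i + j)

/-- A hook word: a sequence of positive integers `w₁ ≥ ⋯ ≥ w_m < w_{m+1} < ⋯ < w_n`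
for some `m ∈ [n]`. -/
def IsHookWord (w : List ℕ) : Prop :=
  (∀ v ∈ w, 0 < v) ∧
  ∃ m, 1 ≤ m ∧ m ≤ w.length ∧
    (∀ j : ℕ, j + 1 < m → w.getD (j + 1) 0 ≤ w.getD j 0) ∧
    (∀ j : ℕ, m ≤ j + 1 → j + 1 < w.length → w.getD j 0 < w.getD (j + 1) 0)

/-- `r` is a hook subword of maximal length in `s`. -/
def IsMaxHookSubwordIn (r s : List ℕ) : Prop :=
  r.Sublist s ∧ IsHookWord r ∧
    ∀ t : List ℕ, t.Sublist s → IsHookWord t → t.length ≤ r.length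

/-- A (semistandard) decomposition tableau of shifted shape `lam`. -/
def IsDecompTab (lam : List ℕ) (T : ℕ × ℕ → ℕ) : Prop :=
  (∀ i, 1 ≤ i → i ≤ lam.length → IsHookWord (rowWord lam T i)) ∧
  (∀ i, 1 ≤ i → i + 1 ≤ lam.length →
    IsMaxHookSubwordIn (rowWord lam T i) (rowWord lam T (i + 1) ++ rowWord lam T i))

/-! ## Set-valued decomposition tableaux -/

/-- A set-valued decomposition tableau: boxes of `SD_lam` are filled by finite nonempty
sets of positive integers, all of whose distributions are decomposition tableaux. -/
def IsSetDecompTab (lam : List ℕ) (T : ℕ × ℕ → Finset ℕ) : Prop :=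
  (∀ i j, InSD lam i j → (T (i, j)).Nonempty ∧ 0 ∉ T (i, j)) ∧
  (∀ d : ℕ × ℕ → ℕ, (∀ i j, InSD lam i j → d (i, j) ∈ T (i, j)) → IsDecompTab lam d)

/-- Set-valued decomposition tableau whose every entry is contained in `{1, …, n}`. -/
def IsSetDecompTabN (n : ℕ) (lam : List ℕ) (T : ℕ × ℕ → Finset ℕ) : Prop :=
  IsSetDecompTab lam T ∧ ∀ i j, InSD lam i j → ∀ v ∈ T (i, j), v ≤ n

/-! ## Reverse row reading words -/

/-- The boxes of `SD_lam` in reverse row reading order: the first row read right to left,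
then the second row right to left, and so on. -/
def revrowBoxes (lam : List ℕ) : List (ℕ × ℕ) :=
  (List.range lam.length).flatMap fun r =>
    (List.range (lam.getD r 0)).reverse.map fun j => (r + 1, r + 1 + j)

/-- Position of a box in the reverse row reading order. -/
def boxIdx (lam : List ℕ) (b : ℕ × ℕ) : ℕ := (revrowBoxes lam).idxOf b

/-- The reverse row reading word of a set-valued tableau, with each letter labelled by
its box: entries within each box are listed in decreasing order. -/
def revrowEntries (lam : List ℕ) (T : ℕ × ℕ → Finset ℕ) : List ((ℕ × ℕ) × ℕ) :=
  (revrowBoxes lam).flatMap fun b => (((T b).sort (· ≤ ·)).reverse).map fun v => (b, v)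

/-- The reverse row reading word of a set-valued tableau. -/
def revrowWord (lam : List ℕ) (T : ℕ × ℕ → Finset ℕ) : List ℕ :=
  (revrowEntries lam T).map Prod.snd

/-- `wtSet lam T k` is the number of boxes of `T` whose entry contains `k`. -/
noncomputable def wtSet (lam : List ℕ) (T : ℕ × ℕ → Finset ℕ) (k : ℕ) : ℕ :=
  ((revrowBoxes lam).filter fun b => decide (k ∈ T b)).length

/-- `wtNum lam T k` is the number of boxes of an ordinary tableau `T` equal to `k`. -/
noncomputable def wtNum (lam : List ℕ) (T : ℕ × ℕ → ℕ) (k : ℕ) : ℕ :=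
  ((revrowBoxes lam).filter fun b => decide (T b = k)).length

/-! ## Parenthesis pairing: `i`-unpaired letters -/

/-- Number of unmatched `i+1`'s ( "(" ) after scanning `u` left to right,
where each `i` ( ")" ) cancels the most recent unmatched `i+1`. -/
def openCount (i : ℕ) (u : List ℕ) : ℕ :=
  u.foldl (fun acc a => if a = i + 1 then acc + 1 else if a = i then acc - 1 else acc) 0

/-- Number of unmatched `i`'s ( ")" ) after scanning `u` right to left,
where each `i+1` ( "(" ) cancels the nearest unmatched `i` to its right. -/
def closeCount (i : ℕ) (u : List ℕ) : ℕ :=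
  u.foldr (fun a acc => if a = i then acc + 1 else if a = i + 1 then acc - 1 else acc) 0

/-- Position `p` of `w` holds an `i`-unpaired letter equal to `i+1`. -/
def UnpairedHigh (i : ℕ) (w : List ℕ) (p : ℕ) : Prop :=
  p < w.length ∧ w.getD p 0 = i + 1 ∧ closeCount i (w.drop (p + 1)) = 0

/-- Position `p` of `w` holds an `i`-unpaired letter equal to `i`. -/
def UnpairedLow (i : ℕ) (w : List ℕ) (p : ℕ) : Prop :=
  p < w.length ∧ w.getD p 0 = i ∧ openCount i (w.take p) = 0

instance (i : ℕ) (w : List ℕ) (p : ℕ) : Decidable (UnpairedHigh i w p) := by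
  unfold UnpairedHigh; infer_instance

instance (i : ℕ) (w : List ℕ) (p : ℕ) : Decidable (UnpairedLow i w p) := by
  unfold UnpairedLow; infer_instance

/-- The number of `i`-unpaired letters equal to `i+1` in `w`. -/
def numUnpairedHigh (i : ℕ) (w : List ℕ) : ℕ :=
  ((List.range w.length).filter fun p => decide (UnpairedHigh i w p)).length

/-- The number of `i`-unpaired letters equal to `i` in `w`. -/
def numUnpairedLow (i : ℕ) (w : List ℕ) : ℕ :=
  ((List.range w.length).filter fun p => decide (UnpairedLow i w p)).length

/-! ## Iterated partial operators and string lengths -/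

/-- Iterate a partial operator, with the convention that `0` (i.e. `none`) is absorbing. -/
def iterOpt {α : Type*} (g : α → Option α) : ℕ → α → Option α
  | 0, a => some a
  | k + 1, a => (g a).bind (iterOpt g k)

/-- `m` is the exact string length `sup {k | g^k a ≠ 0}` of `a` under `g`. -/
def HasStringLen {α : Type*} (g : α → Option α) (a : α) (m : ℕ) : Prop :=
  iterOpt g m a ≠ none ∧ iterOpt g (m + 1) a = none

/-! ## The queer crystal operators on set-valued decomposition tableaux -/

/-- The raising crystal operator `e_i` on set-valued decomposition tableaux. -/
noncomputable def eCrystal (lam : List ℕ) (i : ℕ) (T : ℕ × ℕ → Finset ℕ) :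
    Option (ℕ × ℕ → Finset ℕ) :=
  if h : ∃ p, UnpairedHigh i (revrowWord lam T) p then
    let xy := ((revrowEntries lam T).getD (Nat.find h) ((0, 0), 0)).1
    let T1 := Function.update T xy (insert i ((T xy).erase (i + 1)))
    if IsSetDecompTab lam T1 then some T1
    else if _hab : ∃ m, m < boxIdx lam xy ∧ i ∈ T ((revrowBoxes lam).getD m (0, 0)) ∧
        i + 1 ∈ T ((revrowBoxes lam).getD m (0, 0)) then
      let m := Nat.findGreatest (fun m => m < boxIdx lam xy ∧
          i ∈ T ((revrowBoxes lam).getD m (0, 0)) ∧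
          i + 1 ∈ T ((revrowBoxes lam).getD m (0, 0))) (boxIdx lam xy)
      let ab := (revrowBoxes lam).getD m (0, 0)
      some (Function.update (Function.update T ab ((T ab).erase (i + 1))) xy
        (insert i (T xy)))
    else none
  else none

/-- The lowering crystal operator `f_i` on set-valued decomposition tableaux. -/
noncomputable def fCrystal (lam : List ℕ) (i : ℕ) (T : ℕ × ℕ → Finset ℕ) :
    Option (ℕ × ℕ → Finset ℕ) :=
  if _h : ∃ p, UnpairedLow i (revrowWord lam T) p then
    let p := Nat.findGreatest (fun p => UnpairedLow i (revrowWord lam T) p)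
      (revrowWord lam T).length
    let xy := ((revrowEntries lam T).getD p ((0, 0), 0)).1
    let T1 := Function.update T xy (insert (i + 1) ((T xy).erase i))
    if IsSetDecompTab lam T1 then some T1
    else if hab : ∃ m, boxIdx lam xy < m ∧ m < (revrowBoxes lam).length ∧
        i ∈ T ((revrowBoxes lam).getD m (0, 0)) ∧
        i + 1 ∈ T ((revrowBoxes lam).getD m (0, 0)) then
      let ab := (revrowBoxes lam).getD (Nat.find hab) (0, 0)
      some (Function.update (Function.update T ab ((T ab).erase i)) xy
        (insert (i + 1) (T xy)))
    else none
  else none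

/-- The queer raising operator `e_1̄` on set-valued decomposition tableaux. -/
noncomputable def eBarCrystal (lam : List ℕ) (T : ℕ × ℕ → Finset ℕ) :
    Option (ℕ × ℕ → Finset ℕ) :=
  if h : ∃ p, p < (revrowWord lam T).length ∧ (revrowWord lam T).getD p 0 = 2 ∧
      ∀ q < p, (revrowWord lam T).getD q 0 ≠ 1 then
    let xy := ((revrowEntries lam T).getD (Nat.find h) ((0, 0), 0)).1
    if 1 ∈ T xy then none
    else some (Function.update T xy (insert 1 ((T xy).erase 2)))
  else none

/-- The queer lowering operator `f_1̄` on set-valued decomposition tableaux. -/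
noncomputable def fBarCrystal (lam : List ℕ) (T : ℕ × ℕ → Finset ℕ) :
    Option (ℕ × ℕ → Finset ℕ) :=
  if h : ∃ p, p < (revrowWord lam T).length ∧ (revrowWord lam T).getD p 0 = 1 ∧
      ∀ q < p, (revrowWord lam T).getD q 0 ≠ 2 then
    let xy := ((revrowEntries lam T).getD (Nat.find h) ((0, 0), 0)).1
    some (Function.update T xy (insert 2 ((T xy).erase 1)))
  else none
/-! ## Multiset-valued decomposition tableaux -/

/-- A multiset-valued decomposition tableau in which only the entry `1` may repeat
within a box, all of whose distributions are decomposition tableaux. -/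
def IsMultisetDecompTab (lam : List ℕ) (T : ℕ × ℕ → Multiset ℕ) : Prop :=
  (∀ i j, InSD lam i j → T (i, j) ≠ 0 ∧ 0 ∉ T (i, j) ∧
      ∀ v : ℕ, v ≠ 1 → (T (i, j)).count v ≤ 1) ∧
  (∀ d : ℕ × ℕ → ℕ, (∀ i j, InSD lam i j → d (i, j) ∈ T (i, j)) → IsDecompTab lam d)

/-- Reverse row reading word of a multiset-valued tableau, with boxes recorded. -/
def revrowEntriesM (lam : List ℕ) (T : ℕ × ℕ → Multiset ℕ) : List ((ℕ × ℕ) × ℕ) :=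
  (revrowBoxes lam).flatMap fun b => (((T b).sort (· ≤ ·)).reverse).map fun v => (b, v)

/-- Reverse row reading word of a multiset-valued tableau. -/
def revrowWordM (lam : List ℕ) (T : ℕ × ℕ → Multiset ℕ) : List ℕ :=
  (revrowEntriesM lam T).map Prod.snd

/-- The operator `e*_1̄` on multiset-valued decomposition tableaux: if the first `2` of
the reverse row reading word occurs before every `1`, change it to a `1`. -/
noncomputable def eStarBar (lam : List ℕ) (T : ℕ × ℕ → Multiset ℕ) :
    Option (ℕ × ℕ → Multiset ℕ) :=
  if h : ∃ p, p < (revrowWordM lam T).length ∧ (revrowWordM lam T).getD p 0 = 2 ∧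
      ∀ q < p, (revrowWordM lam T).getD q 0 ≠ 1 then
    let b := ((revrowEntriesM lam T).getD (Nat.find h) ((0, 0), 0)).1
    some (Function.update T b (1 ::ₘ (T b).erase 2))
  else none

/-- The operator `f*_1̄` on multiset-valued decomposition tableaux: if the first `1` of
the reverse row reading word occurs before every `2`, change it to a `2`. -/
noncomputable def fStarBar (lam : List ℕ) (T : ℕ × ℕ → Multiset ℕ) :
    Option (ℕ × ℕ → Multiset ℕ) :=
  if h : ∃ p, p < (revrowWordM lam T).length ∧ (revrowWordM lam T).getD p 0 = 1 ∧
      ∀ q < p, (revrowWordM lam T).getD q 0 ≠ 2 then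
    let b := ((revrowEntriesM lam T).getD (Nat.find h) ((0, 0), 0)).1
    some (Function.update T b (2 ::ₘ (T b).erase 1))
  else none

/-! ## Linked `i`-words and square-root crystal operators -/

/-- Characters of a linked `i`-word: `(`, `)` and `-`. -/
inductive PChar : Type
  | op : PChar
  | cl : PChar
  | dash : PChar
  deriving DecidableEq

/-- The linked `i`-word of a set-valued tableau, with each character labelled by its box:
a box containing `i` but not `i+1` gives `)`, a box containing `i+1` but not `i` gives `(`,
and a box containing both gives `)-(`; boxes are read in reverse row reading order. -/
def tokens (lam : List ℕ) (i : ℕ) (T : ℕ × ℕ → Finset ℕ) : List (PChar × (ℕ × ℕ)) :=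
  (revrowBoxes lam).flatMap fun b =>
    if i ∈ T b ∧ i + 1 ∈ T b then [(PChar.cl, b), (PChar.dash, b), (PChar.op, b)]
    else if i ∈ T b then [(PChar.cl, b)]
    else if i + 1 ∈ T b then [(PChar.op, b)]
    else []

/-- Unmatched `(`s after scanning left to right (ignoring dashes). -/
def openCnt (u : List PChar) : ℕ :=
  u.foldl (fun acc a => match a with
    | PChar.op => acc + 1
    | PChar.cl => acc - 1
    | PChar.dash => acc) 0

/-- Unmatched `)`s after scanning right to left (ignoring dashes). -/
def closeCnt (u : List PChar) : ℕ :=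
  u.foldr (fun a acc => match a with
    | PChar.cl => acc + 1
    | PChar.op => acc - 1
    | PChar.dash => acc) 0

/-- Position `p` holds an unpaired `(`. -/
def UnpairedOp (ws : List PChar) (p : ℕ) : Prop :=
  p < ws.length ∧ ws.getD p PChar.dash = PChar.op ∧ closeCnt (ws.drop (p + 1)) = 0

/-- Position `p` holds an unpaired `)`. -/
def UnpairedCl (ws : List PChar) (p : ℕ) : Prop :=
  p < ws.length ∧ ws.getD p PChar.dash = PChar.cl ∧ openCnt (ws.take p) = 0

/-- A fully matched (balanced) parenthesis word, ignoring dashes. -/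
def BalancedP (u : List PChar) : Prop :=
  u.count PChar.op = u.count PChar.cl ∧
  ∀ k, (u.take k).count PChar.cl ≤ (u.take k).count PChar.op

/-- The `(` at position `a` is matched with the `)` at position `b`. -/
def MatchedPair (ws : List PChar) (a b : ℕ) : Prop :=
  a < b ∧ b < ws.length ∧ ws.getD a PChar.dash = PChar.op ∧
  ws.getD b PChar.dash = PChar.cl ∧ BalancedP ((ws.drop (a + 1)).take (b - (a + 1)))

/-- Generating relation for equivalence classes of characters: a matched pair together
with everything between them lies in one class, and so do the three characters `)-(`
coming from a single box. -/
def LinkRel (ws : List PChar) (p q : ℕ) : Prop :=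
  (∃ a b, MatchedPair ws a b ∧ a ≤ p ∧ p ≤ b ∧ a ≤ q ∧ q ≤ b) ∨
  (∃ d, 1 ≤ d ∧ d + 1 < ws.length ∧ ws.getD d PChar.op = PChar.dash ∧
    (p = d - 1 ∨ p = d ∨ p = d + 1) ∧ (q = d - 1 ∨ q = d ∨ q = d + 1))

/-- Two positions lie in the same equivalence class of the linked `i`-word. -/
def SameClass (ws : List PChar) : ℕ → ℕ → Prop := Relation.ReflTransGen (LinkRel ws)

/-- The class of position `p` contains an unpaired `(`. -/
def HasUnpairedOpIn (ws : List PChar) (p : ℕ) : Prop :=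
  ∃ q, SameClass ws p q ∧ UnpairedOp ws q

/-- The class of position `p` contains an unpaired `)`. -/
def HasUnpairedClIn (ws : List PChar) (p : ℕ) : Prop :=
  ∃ q, SameClass ws p q ∧ UnpairedCl ws q

/-- Position `p` belongs to a left form: a class with no unpaired `)` that ends
with an unpaired `(`. -/
def IsLeftFormAt (ws : List PChar) (p : ℕ) : Prop :=
  p < ws.length ∧ HasUnpairedOpIn ws p ∧ ¬ HasUnpairedClIn ws p

/-- Position `p` belongs to a right form: a class with no unpaired `(` that starts
with an unpaired `)`. -/
def IsRightFormAt (ws : List PChar) (p : ℕ) : Prop :=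
  p < ws.length ∧ HasUnpairedClIn ws p ∧ ¬ HasUnpairedOpIn ws p

/-- The square-root raising operator `e'_i` on set-valued decomposition tableaux. -/
noncomputable def eSqrt (lam : List ℕ) (i : ℕ) (T : ℕ × ℕ → Finset ℕ) :
    Option (ℕ × ℕ → Finset ℕ) :=
  let tk := tokens lam i T
  let ws := tk.map Prod.fst
  if hc : ∃ p, UnpairedOp ws p ∧ HasUnpairedClIn ws p then
    -- the `)-(` at the end of the combined form: remove `i+1` from its box
    let b := (tk.getD (Nat.find hc) (PChar.op, (0, 0))).2
    some (Function.update T b ((T b).erase (i + 1)))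
  else if hl : ∃ p, IsLeftFormAt ws p then
    -- the `(` at the start of the first left form: add `i` to its box
    let b := (tk.getD (Nat.find hl) (PChar.op, (0, 0))).2
    some (Function.update T b (insert i (T b)))
  else none

/-- The square-root lowering operator `f'_i` on set-valued decomposition tableaux. -/
noncomputable def fSqrt (lam : List ℕ) (i : ℕ) (T : ℕ × ℕ → Finset ℕ) :
    Option (ℕ × ℕ → Finset ℕ) :=
  let tk := tokens lam i T
  let ws := tk.map Prod.fst
  if hc : ∃ p, UnpairedCl ws p ∧ HasUnpairedOpIn ws p then
    -- the `)-(` at the beginning of the combined form: remove `i` from its box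
    let b := (tk.getD (Nat.find hc) (PChar.op, (0, 0))).2
    some (Function.update T b ((T b).erase i))
  else if _hr : ∃ p, IsRightFormAt ws p then
    -- the `)` at the end of the last right form: add `i+1` to its box
    let b := (tk.getD (Nat.findGreatest (fun p => IsRightFormAt ws p) ws.length)
        (PChar.op, (0, 0))).2
    some (Function.update T b (insert (i + 1) (T b)))
  else none

/-- The square-root queer raising operator `e'_1̄`. -/
noncomputable def eBarSqrt (lam : List ℕ) (T : ℕ × ℕ → Finset ℕ) :
    Option (ℕ × ℕ → Finset ℕ) :=
  if h : ∃ m, m < (revrowBoxes lam).length ∧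
      (1 ∈ T ((revrowBoxes lam).getD m (0, 0)) ∨ 2 ∈ T ((revrowBoxes lam).getD m (0, 0))) then
    let b := (revrowBoxes lam).getD (Nat.find h) (0, 0)
    if 1 ∈ T b then
      if 2 ∈ T b then some (Function.update T b ((T b).erase 2)) else none
    else some (Function.update T b (insert 1 (T b)))
  else none

/-- The square-root queer lowering operator `f'_1̄`. -/
noncomputable def fBarSqrt (lam : List ℕ) (T : ℕ × ℕ → Finset ℕ) :
    Option (ℕ × ℕ → Finset ℕ) :=
  if h : ∃ m, m < (revrowBoxes lam).length ∧
      (1 ∈ T ((revrowBoxes lam).getD m (0, 0)) ∨ 2 ∈ T ((revrowBoxes lam).getD m (0, 0))) then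
    let b := (revrowBoxes lam).getD (Nat.find h) (0, 0)
    if 2 ∈ T b then
      if 1 ∈ T b then some (Function.update T b ((T b).erase 1)) else none
    else some (Function.update T b (insert 2 (T b)))
  else none
/-! ## Abstract √gl_n- and √q_n-crystals -/

/-- The data of a crystal-like structure: a weight map (coordinates `1, …, n` are the
relevant ones) and partial raising/lowering operators indexed by `i ∈ [n-1]`. -/
structure SqGlData (B : Type*) where
  wt : B → ℕ → ℕ
  e : ℕ → B → Option B
  f : ℕ → B → Option B

/-- The axioms of a `√gl_n`-crystal. -/
def IsSqGlCrystal {B : Type*} (n : ℕ) (D : SqGlData B) : Prop :=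
  (∀ i, 1 ≤ i → i < n → ∀ b, ∃ ep ph : ℕ,
      HasStringLen (D.e i) b ep ∧ HasStringLen (D.f i) b ph ∧
      Even (ep + ph) ∧ (ph : ℤ) - ep = 2 * ((D.wt b i : ℤ) - D.wt b (i + 1))) ∧
  (∀ i, 1 ≤ i → i < n → ∀ b c, D.e i b = some c ↔ D.f i c = some b) ∧
  (∀ i, 1 ≤ i → i < n → ∀ b c, D.e i b = some c → ∀ ep, HasStringLen (D.e i) b ep →
      ∀ k, (D.wt c k : ℤ) - D.wt b k =
        if Even ep then (if k = i then 1 else 0) else (if k = i + 1 then -1 else 0))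

/-- The data of a queer crystal-like structure. -/
structure SqQData (B : Type*) extends SqGlData B where
  ebar : B → Option B
  fbar : B → Option B

/-- The axioms of a `√q_n`-crystal. -/
def IsSqQnCrystal {B : Type*} (n : ℕ) (D : SqQData B) : Prop :=
  IsSqGlCrystal n D.toSqGlData ∧
  (∀ i, 3 ≤ i → i < n → ∀ b,
      (D.e i b).bind D.ebar = (D.ebar b).bind (D.e i) ∧
      (D.f i b).bind D.ebar = (D.ebar b).bind (D.f i) ∧
      (D.e i b).bind D.fbar = (D.fbar b).bind (D.e i) ∧
      (D.f i b).bind D.fbar = (D.fbar b).bind (D.f i)) ∧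
  (∀ i, 3 ≤ i → i < n → ∀ b c, (D.ebar b = some c ∨ D.fbar b = some c) →
      (∀ m, HasStringLen (D.e i) b m ↔ HasStringLen (D.e i) c m) ∧
      (∀ m, HasStringLen (D.f i) b m ↔ HasStringLen (D.f i) c m)) ∧
  (∀ b, ∃ ep ph : ℕ, HasStringLen D.ebar b ep ∧ HasStringLen D.fbar b ph ∧
      ep + ph = (if D.wt b 1 = 0 ∧ D.wt b 2 = 0 then 0 else 2)) ∧
  (∀ b c, D.ebar b = some c ↔ D.fbar c = some b) ∧
  (∀ b c, D.ebar b = some c → ∀ ep, HasStringLen D.ebar b ep →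
      ∀ k, (D.wt c k : ℤ) - D.wt b k =
        if ep = 2 then (if k = 1 then 1 else 0) else (if k = 2 then -1 else 0))

/-- The square of a partial operator. -/
def sqOp {B : Type*} (g : B → Option B) : B → Option B := fun b => (g b).bind g

/-- The axioms of a (seminormal) `gl_n`-crystal for given weight map and operators. -/
def GlSeminormalAxioms {B : Type*} (n : ℕ) (wt : B → ℕ → ℕ)
    (E F : ℕ → B → Option B) : Prop :=
  (∀ i, 1 ≤ i → i < n → ∀ b c, E i b = some c ↔ F i c = some b) ∧
  (∀ i, 1 ≤ i → i < n → ∀ b c, E i b = some c →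
      ∀ k, (wt c k : ℤ) - wt b k = (if k = i then 1 else 0) - (if k = i + 1 then 1 else 0)) ∧
  (∀ i, 1 ≤ i → i < n → ∀ b, ∃ ep ph : ℕ,
      HasStringLen (E i) b ep ∧ HasStringLen (F i) b ph ∧
      (ph : ℤ) - ep = (wt b i : ℤ) - wt b (i + 1))

/-- The additional axioms making a `gl_n`-crystal into a `q_n`-crystal. -/
def QnExtraAxioms {B : Type*} (n : ℕ) (wt : B → ℕ → ℕ)
    (E F : ℕ → B → Option B) (Eb Fb : B → Option B) : Prop :=
  (∀ i, 3 ≤ i → i < n → ∀ b,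
      (E i b).bind Eb = (Eb b).bind (E i) ∧ (F i b).bind Eb = (Eb b).bind (F i) ∧
      (E i b).bind Fb = (Fb b).bind (E i) ∧ (F i b).bind Fb = (Fb b).bind (F i)) ∧
  (∀ i, 3 ≤ i → i < n → ∀ b c, (Eb b = some c ∨ Fb b = some c) →
      (∀ m, HasStringLen (E i) b m ↔ HasStringLen (E i) c m) ∧
      (∀ m, HasStringLen (F i) b m ↔ HasStringLen (F i) c m)) ∧
  (∀ b c, Eb b = some c ↔ Fb c = some b) ∧
  (∀ b c, Eb b = some c →
      ∀ k, (wt c k : ℤ) - wt b k = (if k = 1 then 1 else 0) - (if k = 2 then 1 else 0))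

/-- String length as a function (the supremum of the set of iterates that survive). -/
noncomputable def strLen {B : Type*} (g : B → Option B) (b : B) : ℕ :=
  sSup {k | iterOpt g k b ≠ none}

/-- Tensor product of `√gl_n`-crystal data. -/
noncomputable def tensorGl {B C : Type*} (DB : SqGlData B) (DC : SqGlData C) :
    SqGlData (B × C) where
  wt := fun bc k => DB.wt bc.1 k + DC.wt bc.2 k
  e := fun i bc =>
    if strLen (DB.e i) bc.1 ≤ strLen (DC.f i) bc.2 then
      (DC.e i bc.2).map fun c' => (bc.1, c')
    else (DB.e i bc.1).map fun b' => (b', bc.2)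
  f := fun i bc =>
    if strLen (DB.e i) bc.1 < strLen (DC.f i) bc.2 then
      (DC.f i bc.2).map fun c' => (bc.1, c')
    else (DB.f i bc.1).map fun b' => (b', bc.2)

/-- Tensor product of `√q_n`-crystal data. -/
noncomputable def tensorQ {B C : Type*} (DB : SqQData B) (DC : SqQData C) :
    SqQData (B × C) where
  toSqGlData := tensorGl DB.toSqGlData DC.toSqGlData
  ebar := fun bc =>
    if DB.wt bc.1 1 = 0 ∧ DB.wt bc.1 2 = 0 then (DC.ebar bc.2).map fun c' => (bc.1, c')
    else (DB.ebar bc.1).map fun b' => (b', bc.2)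
  fbar := fun bc =>
    if DB.wt bc.1 1 = 0 ∧ DB.wt bc.1 2 = 0 then (DC.fbar bc.2).map fun c' => (bc.1, c')
    else (DB.fbar bc.1).map fun b' => (b', bc.2)
/-! ## Generating functions -/

/-- A set-valued decomposition tableau, normalized to be empty off the shifted diagram. -/
def IsNormalizedSVDT (lam : List ℕ) (T : ℕ × ℕ → Finset ℕ) : Prop :=
  IsSetDecompTab lam T ∧ ∀ i j, ¬ InSD lam i j → T (i, j) = ∅

/-- A decomposition tableau, normalized to be `0` off the shifted diagram. -/
def IsNormalizedDT (lam : List ℕ) (T : ℕ × ℕ → ℕ) : Prop :=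
  IsDecompTab lam T ∧ ∀ i j, ¬ InSD lam i j → T (i, j) = 0

/-- `Σ_λ = ∑_{T ∈ SetDecTab(λ)} x^T` as a formal power series; variable `k` stands for
`x_{k+1}`, i.e. records occurrences of the letter `k+1`. -/
noncomputable def SigmaLam (lam : List ℕ) : MvPowerSeries ℕ ℤ :=
  fun d => (Set.ncard
    {T : ℕ × ℕ → Finset ℕ | IsNormalizedSVDT lam T ∧ ∀ k, wtSet lam T (k + 1) = d k} : ℤ)

/-- The Schur `P`-function `P_λ = ∑_{T ∈ DecTab(λ)} x^T` as a formal power series. -/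
noncomputable def SchurPfun (lam : List ℕ) : MvPowerSeries ℕ ℤ :=
  fun d => (Set.ncard
    {T : ℕ × ℕ → ℕ | IsNormalizedDT lam T ∧ ∀ k, wtNum lam T (k + 1) = d k} : ℤ)

/-! ## Marked (primed) shifted tableaux and `GP`-functions.
We encode the marked alphabet `1' < 1 < 2' < 2 < ⋯` into `ℕ` by `k' ↦ 2k - 1` and
`k ↦ 2k`, so primed letters are odd and the natural order is preserved. -/

/-- A semistandard marked shifted tableau (as a distribution): weakly increasing rows and
columns, no primed (odd) letter repeated in a row, no unprimed (even) letter repeated in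
a column. -/
def IsSemistandardMarked (lam : List ℕ) (d : ℕ × ℕ → ℕ) : Prop :=
  (∀ i j, InSD lam i j → InSD lam i (j + 1) → d (i, j) ≤ d (i, j + 1)) ∧
  (∀ i j, InSD lam i j → InSD lam (i + 1) j → d (i, j) ≤ d (i + 1, j)) ∧
  (∀ i j j', InSD lam i j → InSD lam i j' → j < j' → d (i, j) = d (i, j') →
    Even (d (i, j))) ∧
  (∀ i i' j, InSD lam i j → InSD lam i' j → i < i' → d (i, j) = d (i', j) →
    Odd (d (i, j)))

/-- A semistandard set-valued shifted tableau in the marked alphabet, with no primed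
letters on the main diagonal. -/
def IsSetSSMarkedShifted (lam : List ℕ) (T : ℕ × ℕ → Finset ℕ) : Prop :=
  (∀ i j, InSD lam i j → (T (i, j)).Nonempty ∧ ∀ v ∈ T (i, j), 1 ≤ v) ∧
  (∀ i, InSD lam i i → ∀ v ∈ T (i, i), Even v) ∧
  (∀ d : ℕ × ℕ → ℕ, (∀ i j, InSD lam i j → d (i, j) ∈ T (i, j)) →
    IsSemistandardMarked lam d)

/-- `wtMarked lam T k` is the total number of occurrences of `k` or `k'` in `T`. -/
noncomputable def wtMarked (lam : List ℕ) (T : ℕ × ℕ → Finset ℕ) (k : ℕ) : ℕ :=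
  ((revrowBoxes lam).map fun b =>
    ((T b).filter fun v => v = 2 * k - 1 ∨ v = 2 * k).card).sum

/-- The K-theoretic Schur `P`-function `GP_λ` as a formal power series; variable `k`
stands for `x_{k+1}`. -/
noncomputable def GPfun (lam : List ℕ) : MvPowerSeries ℕ ℤ :=
  fun d => (Set.ncard
    {T : ℕ × ℕ → Finset ℕ | IsSetSSMarkedShifted lam T ∧
      (∀ i j, ¬ InSD lam i j → T (i, j) = ∅) ∧
      ∀ k, wtMarked lam T (k + 1) = d k} : ℤ)

/-! ## Polynomial versions (variables `x_1, …, x_n`, i.e. `X 1, …, X n`) -/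

/-- The boxes of the (unshifted) Young diagram of `lam`, listed row by row. -/
def YDboxes (lam : List ℕ) : List (ℕ × ℕ) :=
  (List.range lam.length).flatMap fun r =>
    (List.range (lam.getD r 0)).map fun j => (r + 1, j + 1)

/-- A semistandard (unshifted) Young tableau: rows weakly increase, columns strictly
increase. -/
def IsSemistandardYT (lam : List ℕ) (d : ℕ × ℕ → ℕ) : Prop :=
  (∀ i j, InYD lam i j → InYD lam i (j + 1) → d (i, j) ≤ d (i, j + 1)) ∧
  (∀ i j, InYD lam i j → InYD lam (i + 1) j → d (i, j) < d (i + 1, j))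

/-- A semistandard set-valued (unshifted) tableau with entries in `{1, …, n}`,
normalized off the diagram. -/
def IsSetSSYT (n : ℕ) (lam : List ℕ) (T : ℕ × ℕ → Finset ℕ) : Prop :=
  (∀ i j, InYD lam i j → (T (i, j)).Nonempty ∧ ∀ v ∈ T (i, j), 1 ≤ v ∧ v ≤ n) ∧
  (∀ i j, ¬ InYD lam i j → T (i, j) = ∅) ∧
  (∀ d : ℕ × ℕ → ℕ, (∀ i j, InYD lam i j → d (i, j) ∈ T (i, j)) → IsSemistandardYT lam d)

/-- The symmetric Grothendieck polynomial `G_λ(x_1, …, x_n)`. -/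
noncomputable def Gpoly (n : ℕ) (lam : List ℕ) : MvPolynomial ℕ ℤ :=
  ∑ᶠ T ∈ {T : ℕ × ℕ → Finset ℕ | IsSetSSYT n lam T},
    ((YDboxes lam).map fun b =>
      ∏ v ∈ T b, (MvPolynomial.X v : MvPolynomial ℕ ℤ)).prod

/-- A semistandard set-valued marked shifted tableau with letters at most `n`,
normalized off the diagram. -/
def IsSetSSMarkedShiftedN (n : ℕ) (lam : List ℕ) (T : ℕ × ℕ → Finset ℕ) : Prop :=
  IsSetSSMarkedShifted lam T ∧ (∀ i j, ¬ InSD lam i j → T (i, j) = ∅) ∧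
  ∀ i j, InSD lam i j → ∀ v ∈ T (i, j), v ≤ 2 * n

/-- The K-theoretic Schur `P`-polynomial `GP_λ(x_1, …, x_n)`. -/
noncomputable def GPpoly (n : ℕ) (lam : List ℕ) : MvPolynomial ℕ ℤ :=
  ∑ᶠ T ∈ {T : ℕ × ℕ → Finset ℕ | IsSetSSMarkedShiftedN n lam T},
    ((revrowBoxes lam).map fun b =>
      ∏ v ∈ T b, (MvPolynomial.X ((v + 1) / 2) : MvPolynomial ℕ ℤ)).prod

/-- The character of the `m`-th tensor power of the standard `√q_n`-crystal, whose
elements are the nonempty subsets of `{1, …, n}` with weight the indicator vector. -/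
noncomputable def standardChar (n m : ℕ) : MvPolynomial ℕ ℤ :=
  ∑ b : Fin m → {S : Finset (Fin n) // S.Nonempty},
    ∏ j : Fin m, ∏ k ∈ (b j).1, (MvPolynomial.X ((k : ℕ) + 1) : MvPolynomial ℕ ℤ)

namespace Stmt5Aux

/-! ### openCount machinery -/

def ocf (i : ℕ) (init : ℕ) (u : List ℕ) : ℕ :=
  u.foldl (fun acc a => if a = i + 1 then acc + 1 else if a = i then acc - 1 else acc) init

lemma openCount_eq_ocf (i : ℕ) (u : List ℕ) : openCount i u = ocf i 0 u := rfl

lemma ocf_append (i init : ℕ) (u v : List ℕ) :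
    ocf i init (u ++ v) = ocf i (ocf i init u) v := by
  simp [ocf, List.foldl_append]

lemma ocf_count (i : ℕ) : ∀ (u : List ℕ) (init : ℕ),
    init + u.count (i + 1) ≤ ocf i init u + u.count i := by
  intro u
  induction u with
  | nil => intro init; simp [ocf]
  | cons a t ih =>
    intro init
    by_cases h1 : a = i + 1
    · have hne : a ≠ i := by omega
      have : ocf i init (a :: t) = ocf i (init + 1) t := by simp [ocf, h1]
      rw [this]
      have := ih (init + 1)
      simp [List.count_cons, h1, hne]
      omega
    · by_cases h2 : a = i
      · have : ocf i init (a :: t) = ocf i (init - 1) t := by simp [ocf, h1, h2]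
        rw [this]
        have := ih (init - 1)
        have hne : a ≠ i + 1 := h1
        simp [List.count_cons, h2, hne]
        omega
      · have : ocf i init (a :: t) = ocf i init t := by simp [ocf, h1, h2]
        rw [this]
        have := ih init
        simp [List.count_cons, h1, h2]
        omega

/-- Master inequality: if the whole prefix is balanced, then in any suffix the
number of `i+1`'s is at most the number of `i`'s. -/
lemma count_le_of_openCount_zero (i : ℕ) (W0 W1 : List ℕ)
    (h : openCount i (W0 ++ W1) = 0) : W1.count (i + 1) ≤ W1.count i := by
  have h1 : ocf i (ocf i 0 W0) W1 = 0 := by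
    rw [openCount_eq_ocf, ocf_append] at h; exact h
  have := ocf_count i W1 (ocf i 0 W0)
  omega

/-! ### hook word lemmas -/

lemma hook_incr_chain {w : List ℕ} {m : ℕ}
    (hm2 : ∀ j : ℕ, m ≤ j + 1 → j + 1 < w.length → w.getD j 0 < w.getD (j + 1) 0) :
    ∀ a b : ℕ, m ≤ a + 1 → a < b → b < w.length → w.getD a 0 < w.getD b 0 := by
  intro a b hma hab hb
  induction b with
  | zero => omega
  | succ c ih =>
    rcases Nat.lt_or_ge a c with hc | hc
    · exact lt_trans (ih (by omega) (by omega)) (hm2 c (by omega) hb)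
    · have : a = c := by omega
      subst this
      exact hm2 a (by omega) hb

lemma hook_dec_chain {w : List ℕ} {m : ℕ}
    (hm1 : ∀ j : ℕ, j + 1 < m → w.getD (j + 1) 0 ≤ w.getD j 0) :
    ∀ a b : ℕ, a ≤ b → b < m → w.getD b 0 ≤ w.getD a 0 := by
  intro a b hab hb
  induction b with
  | zero => have : a = 0 := by omega
            subst this; rfl
  | succ c ih =>
    rcases Nat.lt_or_ge a (c+1) with hc | hc
    · exact le_trans (hm1 c hb) (ih (by omega) (by omega))
    · have : a = c + 1 := by omega
      subst this; rfl

/-- If `w` is a hook word with `w_{t0} ≤ w_{s0}` for some `s0 < t0`, then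
`w` is weakly decreasing on positions `≤ s0`. -/
lemma hook_prefix_ge {w : List ℕ} (hw : IsHookWord w) {s0 t0 : ℕ}
    (hst : s0 < t0) (ht0 : t0 < w.length) (hge : w.getD t0 0 ≤ w.getD s0 0) :
    ∀ s s' : ℕ, s ≤ s' → s' ≤ s0 → w.getD s' 0 ≤ w.getD s 0 := by
  obtain ⟨-, m, hm1, hmlen, hdec, hinc⟩ := hw
  intro s s' hss hs0
  by_cases hcase : m ≤ s0 + 1
  · exact absurd (hook_incr_chain hinc s0 t0 hcase hst ht0) (by omega)
  · exact hook_dec_chain hdec s s' hss (by omega)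

/-- No ascent followed by a descent in a hook word. -/
lemma hook_no_updown {w : List ℕ} (hw : IsHookWord w) {s t t' : ℕ}
    (h1 : s < t) (h2 : t < t') (h3 : t' < w.length)
    (hup : w.getD s 0 < w.getD t 0) (hdown : w.getD t' 0 < w.getD t 0) : False := by
  obtain ⟨-, m, hm1, hmlen, hdec, hinc⟩ := hw
  by_cases hcase : m ≤ t + 1
  · exact absurd (hook_incr_chain hinc t t' hcase h2 h3) (by omega)
  · exact absurd (hook_dec_chain hdec s t (by omega) (by omega)) (by omega)

/-- In a hook word, an ascent at position `j0` forces strict increase from `j0` on. -/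
lemma hook_incr_of_ascent {w : List ℕ} (hw : IsHookWord w) {j0 : ℕ}
    (hj0 : j0 + 1 < w.length) (hasc : w.getD j0 0 < w.getD (j0 + 1) 0) :
    ∀ a b : ℕ, j0 ≤ a → a < b → b < w.length → w.getD a 0 < w.getD b 0 := by
  obtain ⟨-, m, hm1, hmlen, hdec, hinc⟩ := hw
  have hm : m ≤ j0 + 1 := by
    by_contra hc
    exact absurd (hdec j0 (by omega)) (by omega)
  intro a b ha hab hb
  exact hook_incr_chain hinc a b (by omega) hab hb

/-- A suffix of a hook word is a hook word. -/
lemma hook_drop {w : List ℕ} (hw : IsHookWord w) {j0 : ℕ} (hj0 : j0 < w.length) :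
    IsHookWord (w.drop j0) := by
  obtain ⟨hpos, m, hm1, hmlen, hdec, hinc⟩ := hw
  have hlen : (w.drop j0).length = w.length - j0 := by simp
  have hget : ∀ t : ℕ, t < w.length - j0 → (w.drop j0).getD t 0 = w.getD (j0 + t) 0 := by
    intro t ht
    rw [List.getD_eq_getElem _ _ (by omega : t < (w.drop j0).length),
        List.getD_eq_getElem _ _ (by omega : j0 + t < w.length)]
    simp
  refine ⟨fun v hv => hpos v (List.mem_of_mem_drop hv), max (m - j0) 1, le_max_right _ _, ?_, ?_, ?_⟩
  · simp only [hlen]; omega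
  · intro j hj
    have hj' : j + 1 < m - j0 := by omega
    rw [hget (j+1) (by omega), hget j (by omega),
        (by omega : j0 + (j+1) = j0 + j + 1)]
    exact hdec (j0 + j) (by omega)
  · intro j hjm hjl
    rw [hlen] at hjl
    rw [hget (j+1) (by omega), hget j (by omega),
        (by omega : j0 + (j+1) = j0 + j + 1)]
    exact hinc (j0 + j) (by omega) (by omega)


/-- getD over an append, left side. -/
lemma getD_app_l {D s : List ℕ} {t : ℕ} (ht : t < D.length) :
    (D ++ s).getD t 0 = D.getD t 0 := by
  have h1 : (D ++ s).getD t 0 = (D ++ s)[t]'(by simp; omega) :=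
    List.getD_eq_getElem _ _ (by simp; omega)
  have h2 : D.getD t 0 = D[t] := List.getD_eq_getElem _ _ ht
  rw [h1, h2]; exact List.getElem_append_left ht

/-- getD over an append, right side. -/
lemma getD_app_r {D s : List ℕ} {t : ℕ} (ht1 : D.length ≤ t)
    (ht2 : t < D.length + s.length) :
    (D ++ s).getD t 0 = s.getD (t - D.length) 0 := by
  have h1 : (D ++ s).getD t 0 = (D ++ s)[t]'(by simp; omega) :=
    List.getD_eq_getElem _ _ (by simp; omega)
  have h2 : s.getD (t - D.length) 0 = s[t - D.length]'(by omega) :=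
    List.getD_eq_getElem _ _ (by omega)
  rw [h1, h2]; exact List.getElem_append_right ht1

/-- Gluing a weakly decreasing positive word onto a hook word whose head is
dominated by the last entry gives a hook word. -/
lemma hook_glue1 {D s : List ℕ} (hDne : D ≠ [])
    (hDpos : ∀ v ∈ D, 0 < v)
    (hDdec : ∀ j : ℕ, j + 1 < D.length → D.getD (j + 1) 0 ≤ D.getD j 0)
    (hs : IsHookWord s)
    (hhead : s.getD 0 0 ≤ D.getD (D.length - 1) 0) :
    IsHookWord (D ++ s) := by
  obtain ⟨hspos, m, hm1, hmlen, hdec, hinc⟩ := hs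
  have hslen : 1 ≤ s.length := le_trans hm1 hmlen
  have hDlen : 1 ≤ D.length := List.length_pos_iff.mpr hDne
  refine ⟨?_, D.length + m, by omega, by simp only [List.length_append]; omega, ?_, ?_⟩
  · intro v hv
    rcases List.mem_append.mp hv with h | h
    exacts [hDpos v h, hspos v h]
  · intro j hj
    rcases Nat.lt_or_ge (j + 1) D.length with h | h
    · rw [getD_app_l h, getD_app_l (by omega)]
      exact hDdec j h
    · rcases Nat.eq_or_lt_of_le h with h' | h'
      · have hj' : j = D.length - 1 := by omega
        rw [getD_app_r (by omega) (by omega), getD_app_l (by omega)]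
        rw [(by omega : j + 1 - D.length = 0), hj']
        exact hhead
      · rw [getD_app_r (by omega) (by omega), getD_app_r (by omega) (by omega)]
        rw [(by omega : j + 1 - D.length = j - D.length + 1)]
        exact hdec (j - D.length) (by omega)
  · intro j hjm hjl
    simp only [List.length_append] at hjl
    rw [getD_app_r (by omega) (by omega), getD_app_r (by omega) (by omega)]
    rw [(by omega : j + 1 - D.length = j - D.length + 1)]
    exact hinc (j - D.length) (by omega) (by omega)

/-- Gluing a weakly decreasing positive word onto a strictly increasing positive word
whose head strictly dominates the last entry gives a hook word. -/
lemma hook_glue2 {D s : List ℕ} (hDne : D ≠ []) (hsne : s ≠ [])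
    (hDpos : ∀ v ∈ D, 0 < v) (hspos : ∀ v ∈ s, 0 < v)
    (hDdec : ∀ j : ℕ, j + 1 < D.length → D.getD (j + 1) 0 ≤ D.getD j 0)
    (hsinc : ∀ j : ℕ, j + 1 < s.length → s.getD j 0 < s.getD (j + 1) 0)
    (hhead : D.getD (D.length - 1) 0 < s.getD 0 0) :
    IsHookWord (D ++ s) := by
  have hslen : 1 ≤ s.length := List.length_pos_iff.mpr hsne
  have hDlen : 1 ≤ D.length := List.length_pos_iff.mpr hDne
  refine ⟨?_, D.length, by omega, by simp only [List.length_append]; omega, ?_, ?_⟩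
  · intro v hv
    rcases List.mem_append.mp hv with h | h
    exacts [hDpos v h, hspos v h]
  · intro j hj
    rw [getD_app_l hj, getD_app_l (by omega)]
    exact hDdec j hj
  · intro j hjm hjl
    simp only [List.length_append] at hjl
    rcases Nat.eq_or_lt_of_le hjm with h' | h'
    · have hj' : j = D.length - 1 := by omega
      rw [getD_app_l (by omega), getD_app_r (by omega) (by omega)]
      rw [(by omega : j + 1 - D.length = 0), hj']
      exact hhead
    · rw [getD_app_r (by omega) (by omega), getD_app_r (by omega) (by omega)]
      rw [(by omega : j + 1 - D.length = j - D.length + 1)]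
      exact hsinc (j - D.length) (by omega)

/-- Selecting entries of `l` at a strictly increasing list of positions
gives a sublist. -/
lemma sublist_map_getD (l q : List ℕ) (hq : q.Pairwise (· < ·))
    (hlt : ∀ j ∈ q, j < l.length) :
    (q.map fun j => l.getD j 0).Sublist l := by
  have h2 : (List.map (fun x : Fin l.length => l[x])
      (q.pmap (fun j h => (⟨j, h⟩ : Fin l.length)) hlt)).Sublist l := by
    apply List.map_getElem_sublist
    rw [List.pairwise_pmap hlt]
    exact hq.imp_of_mem fun _ _ h => by intro h1 h2; simpa using h
  rw [List.map_pmap] at h2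
  have heq : q.pmap (fun j (h : j < l.length) => l[(⟨j, h⟩ : Fin l.length)]) hlt
      = q.pmap (fun j (_ : j < l.length) => l.getD j 0) hlt := by
    apply List.pmap_congr_left
    intro a _ h1 _
    exact (List.getD_eq_getElem _ _ h1).symm
  rw [heq, List.pmap_eq_map] at h2
  exact h2


/-! ### Distributions and row words -/

def IsDist (lam : List ℕ) (T : ℕ × ℕ → Finset ℕ) (d : ℕ × ℕ → ℕ) : Prop :=
  ∀ i j, InSD lam i j → d (i, j) ∈ T (i, j)

noncomputable def fallb (T : ℕ × ℕ → Finset ℕ) : ℕ × ℕ → ℕ :=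
  fun b => if h : (T b).Nonempty then (T b).min' h else 0

lemma fallb_mem {T : ℕ × ℕ → Finset ℕ} {b : ℕ × ℕ} (h : (T b).Nonempty) :
    fallb T b ∈ T b := by
  simp only [fallb, dif_pos h]
  exact Finset.min'_mem _ h

lemma isDist_fallb {lam T} (hT : IsSetDecompTab lam T) : IsDist lam T (fallb T) :=
  fun i j h => fallb_mem ((hT.1 i j h).1)

lemma isDist_update {lam T d} (hd : IsDist lam T d) {b1 b2 v : ℕ}
    (hv : InSD lam b1 b2 → v ∈ T (b1, b2)) :
    IsDist lam T (Function.update d (b1, b2) v) := by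
  intro i j h
  by_cases hb : (i, j) = (b1, b2)
  · rw [hb, Function.update_self]
    exact hv (by rw [Prod.mk.injEq] at hb; rw [← hb.1, ← hb.2]; exact h)
  · rw [Function.update_of_ne hb]
    exact hd i j h

lemma rowWord_length (lam : List ℕ) (d : ℕ × ℕ → ℕ) (r : ℕ) :
    (rowWord lam d r).length = lam.getD (r - 1) 0 := by simp [rowWord]

lemma rowWord_getD (lam : List ℕ) (d : ℕ × ℕ → ℕ) (r : ℕ) {j : ℕ}
    (hj : j < lam.getD (r - 1) 0) :
    (rowWord lam d r).getD j 0 = d (r, r + j) := by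
  rw [List.getD_eq_getElem _ _ (by rw [rowWord_length]; exact hj)]
  simp [rowWord]

lemma rowWord_pos {lam T} (hT : IsSetDecompTab lam T) {d} (hd : IsDist lam T d)
    {r : ℕ} (hr1 : 1 ≤ r) (hr2 : r ≤ lam.length) :
    ∀ v ∈ rowWord lam d r, 0 < v := by
  intro v hv
  simp only [rowWord, List.mem_map, List.mem_range] at hv
  obtain ⟨j, hj, rfl⟩ := hv
  have hSD : InSD lam r (r + j) := ⟨hr1, hr2, by omega, by omega⟩
  have h1 := hd r (r + j) hSD
  have h2 := (hT.1 r (r + j) hSD).2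
  exact Nat.pos_of_ne_zero (fun h => h2 (h ▸ h1))

lemma lam_strict {lam : List ℕ} (hlam : IsStrictPartition lam) {x : ℕ}
    (hx2 : 2 ≤ x) (hxL : x ≤ lam.length) :
    lam.getD (x - 1) 0 < lam.getD (x - 2) 0 := by
  have h1 : x - 2 < lam.length - 1 := by omega
  have := List.isChain_iff_getElem.mp hlam.1 (x - 2) (by omega)
  rw [List.getD_eq_getElem _ _ (by omega : x - 1 < lam.length),
      List.getD_eq_getElem _ _ (by omega : x - 2 < lam.length)]
  simpa [List.get_eq_getElem, (by omega : x - 2 + 1 = x - 1)] using this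

/-! ### The core maximality lemmas -/

section Core

variable {lam : List ℕ} {T : ℕ × ℕ → Finset ℕ}
variable (hlam : IsStrictPartition lam) (hT : IsSetDecompTab lam T)
variable {x : ℕ} (hx2 : 2 ≤ x) (hxL : x ≤ lam.length)
variable {d : ℕ × ℕ → ℕ} (hd : IsDist lam T d)
variable {q : List ℕ} (hqne : q ≠ []) (hq : q.Pairwise (· < ·))
variable (hqlt : ∀ j ∈ q, j < lam.getD (x - 1) 0)
variable (hdec : q.Pairwise (fun j j' => d (x, x + j') ≤ d (x, x + j)))

include hlam hT hx2 hxL hd hqne hq hqlt hdec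

omit hqne in
lemma q_len_le : q.length ≤ lam.getD (x - 1) 0 := by
  have hnd : q.Nodup := hq.imp (fun h => Nat.ne_of_lt h)
  have hsub : q ⊆ List.range (lam.getD (x - 1) 0) := by
    intro j hj; exact List.mem_range.mpr (hqlt j hj)
  have := (List.subperm_of_subset hnd hsub).length_le
  simpa using this

lemma core_CL1 {j0 : ℕ} (hj0 : j0 < q.length)
    {α : ℕ} (hα : α ∈ T (x - 1, (x - 1) + j0)) :
    d (x, x + q.getLast hqne) < α := by
  set a := lam.getD (x - 2) 0 with ha
  set bb := lam.getD (x - 1) 0 with hbb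
  have hba : bb < a := lam_strict hlam hx2 hxL
  have hqlen : q.length ≤ bb := q_len_le hlam hT hx2 hxL hd hq hqlt hdec
  have hj0b : j0 < bb := lt_of_lt_of_le hj0 hqlen
  have hx12 : x - 1 - 1 = x - 2 := by omega
  have hSD0 : InSD lam (x - 1) ((x - 1) + j0) :=
    ⟨by omega, by omega, by omega, by rw [hx12]; omega⟩
  by_contra hcon
  push_neg at hcon
  set d' := Function.update d (x - 1, (x - 1) + j0) α with hd'def
  have hd' : IsDist lam T d' := isDist_update hd (fun _ => hα)
  have hDT := hT.2 d' hd'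
  have hmax := hDT.2 (x - 1) (by omega) (by omega)
  rw [(by omega : x - 1 + 1 = x)] at hmax
  have hveq : rowWord lam d' x = rowWord lam d x := by
    simp only [rowWord]
    refine List.map_congr_left (fun j _ => ?_)
    rw [hd'def, Function.update_of_ne (by simp only [ne_eq, Prod.mk.injEq]; omega)]
  rw [hveq] at hmax
  set u := rowWord lam d' (x - 1) with hu_def
  set v := rowWord lam d x with hv_def
  have hu : IsHookWord u := hDT.1 (x - 1) (by omega) (by omega)
  have hulen : u.length = a := by rw [hu_def, rowWord_length, hx12]
  have hvlen : v.length = bb := by rw [hv_def, rowWord_length]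
  set D := q.map (fun j => v.getD j 0) with hD_def
  have hDlen : D.length = q.length := by simp [hD_def]
  have hDval : ∀ t (ht : t < q.length), D.getD t 0 = d (x, x + q[t]) := by
    intro t ht
    rw [hD_def, List.getD_eq_getElem _ _ (by simpa using ht)]
    rw [List.getElem_map, hv_def, rowWord_getD _ _ _ (hqlt _ (by exact List.getElem_mem ht))]
  have hDpos : ∀ w ∈ D, 0 < w := by
    intro w hw
    rw [hD_def] at hw
    obtain ⟨j, hj, rfl⟩ := List.mem_map.mp hw
    rw [hv_def, rowWord_getD _ _ _ (hqlt _ hj)]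
    have hSD : InSD lam x (x + j) := ⟨by omega, hxL, by omega, by
      have := hqlt _ hj; omega⟩
    exact Nat.pos_of_ne_zero (fun h => (hT.1 _ _ hSD).2 (h ▸ hd _ _ hSD))
  have hDdec : ∀ t : ℕ, t + 1 < D.length → D.getD (t + 1) 0 ≤ D.getD t 0 := by
    intro t ht
    rw [hDlen] at ht
    rw [hDval t (by omega), hDval (t + 1) ht]
    have := List.pairwise_iff_getElem.mp hdec t (t + 1) (by omega) ht (by omega)
    exact this
  set s := u.drop j0 with hs_def
  have hslen : s.length = a - j0 := by rw [hs_def, List.length_drop, hulen]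
  have hshook : IsHookWord s := hook_drop hu (by omega)
  have hs0 : s.getD 0 0 = α := by
    rw [hs_def, List.getD_eq_getElem _ _ (by rw [List.length_drop]; omega),
        List.getElem_drop]
    have : u[j0 + 0]'(by omega) = u.getD (j0 + 0) 0 :=
      (List.getD_eq_getElem _ _ (by omega)).symm
    rw [this, (by omega : j0 + 0 = j0), hu_def,
        rowWord_getD _ _ _ (by rw [hx12]; omega), hd'def, Function.update_self]
  have hlastD : D.getD (D.length - 1) 0 = d (x, x + q.getLast hqne) := by
    have h1 : q.getLast hqne = q[q.length - 1] := List.getLast_eq_getElem hqne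
    rw [hDlen, hDval (q.length - 1) (by
      have : 0 < q.length := List.length_pos_iff.mpr hqne
      omega), h1]
  have hDne : D ≠ [] := by
    rw [hD_def]; simpa using hqne
  have hthook : IsHookWord (D ++ s) := by
    apply hook_glue1 hDne hDpos hDdec hshook
    rw [hs0, hlastD]; exact hcon
  have htsub : (D ++ s).Sublist (v ++ u) := by
    apply List.Sublist.append
    · rw [hD_def]
      exact sublist_map_getD v q hq (fun j hj => by rw [hvlen]; exact hqlt j hj)
    · exact List.drop_sublist _ _
  have hlen := hmax.2.2 (D ++ s) htsub hthook
  rw [List.length_append, hDlen, hslen, hulen] at hlen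
  omega

lemma core_CL2step {i : ℕ}
    (hlastle : d (x, x + q.getLast hqne) ≤ i)
    {j0 : ℕ} (hj01 : j0 + 1 < q.length)
    (hseed : i + 1 ∈ T (x - 1, (x - 1) + j0))
    {β : ℕ} (hβ : β ∈ T (x - 1, (x - 1) + (j0 + 1))) :
    β ≤ i + 1 := by
  set a := lam.getD (x - 2) 0 with ha
  set bb := lam.getD (x - 1) 0 with hbb
  have hba : bb < a := lam_strict hlam hx2 hxL
  have hqlen : q.length ≤ bb := q_len_le hlam hT hx2 hxL hd hq hqlt hdec
  have hx12 : x - 1 - 1 = x - 2 := by omega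
  have hSD0 : InSD lam (x - 1) ((x - 1) + j0) :=
    ⟨by omega, by omega, by omega, by rw [hx12]; omega⟩
  have hSD1 : InSD lam (x - 1) ((x - 1) + (j0 + 1)) :=
    ⟨by omega, by omega, by omega, by rw [hx12]; omega⟩
  by_contra hcon
  push_neg at hcon
  set d' := Function.update (Function.update d (x - 1, (x - 1) + j0) (i + 1))
      (x - 1, (x - 1) + (j0 + 1)) β with hd'def
  have hd' : IsDist lam T d' :=
    isDist_update (isDist_update hd (fun _ => hseed)) (fun _ => hβ)
  have hDT := hT.2 d' hd'
  have hmax := hDT.2 (x - 1) (by omega) (by omega)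
  rw [(by omega : x - 1 + 1 = x)] at hmax
  have hveq : rowWord lam d' x = rowWord lam d x := by
    simp only [rowWord]
    refine List.map_congr_left (fun j _ => ?_)
    rw [hd'def, Function.update_of_ne (by simp only [ne_eq, Prod.mk.injEq]; omega),
        Function.update_of_ne (by simp only [ne_eq, Prod.mk.injEq]; omega)]
  rw [hveq] at hmax
  set u := rowWord lam d' (x - 1) with hu_def
  set v := rowWord lam d x with hv_def
  have hu : IsHookWord u := hDT.1 (x - 1) (by omega) (by omega)
  have hulen : u.length = a := by rw [hu_def, rowWord_length, hx12]
  have hvlen : v.length = bb := by rw [hv_def, rowWord_length]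
  have huj0 : u.getD j0 0 = i + 1 := by
    rw [hu_def, rowWord_getD _ _ _ (by rw [hx12]; omega), hd'def,
        Function.update_of_ne (by simp only [ne_eq, Prod.mk.injEq]; omega),
        Function.update_self]
  have huj1 : u.getD (j0 + 1) 0 = β := by
    rw [hu_def, rowWord_getD _ _ _ (by rw [hx12]; omega), hd'def, Function.update_self]
  have hupos : ∀ w ∈ u, 0 < w := rowWord_pos hT hd' (by omega) (by omega)
  have huln : j0 + 1 < u.length := by rw [hulen]; omega
  have hasc := hook_incr_of_ascent hu huln (by rw [huj0, huj1]; omega)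
  set D := q.map (fun j => v.getD j 0) with hD_def
  have hDlen : D.length = q.length := by simp [hD_def]
  have hDval : ∀ t (ht : t < q.length), D.getD t 0 = d (x, x + q[t]) := by
    intro t ht
    rw [hD_def, List.getD_eq_getElem _ _ (by simpa using ht)]
    rw [List.getElem_map, hv_def, rowWord_getD _ _ _ (hqlt _ (by exact List.getElem_mem ht))]
  have hDpos : ∀ w ∈ D, 0 < w := by
    intro w hw
    rw [hD_def] at hw
    obtain ⟨j, hj, rfl⟩ := List.mem_map.mp hw
    rw [hv_def, rowWord_getD _ _ _ (hqlt _ hj)]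
    have hSD : InSD lam x (x + j) := ⟨by omega, hxL, by omega, by
      have := hqlt _ hj; omega⟩
    exact Nat.pos_of_ne_zero (fun h => (hT.1 _ _ hSD).2 (h ▸ hd _ _ hSD))
  have hDdec : ∀ t : ℕ, t + 1 < D.length → D.getD (t + 1) 0 ≤ D.getD t 0 := by
    intro t ht
    rw [hDlen] at ht
    rw [hDval t (by omega), hDval (t + 1) ht]
    exact List.pairwise_iff_getElem.mp hdec t (t + 1) (by omega) ht (by omega)
  set s := u.drop j0 with hs_def
  have hslen : s.length = a - j0 := by rw [hs_def, List.length_drop, hulen]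
  have hsget : ∀ t (ht : t < a - j0), s.getD t 0 = u.getD (j0 + t) 0 := by
    intro t ht
    have hlt1 : t < s.length := by rw [hslen]; omega
    have hlt2 : j0 + t < u.length := by rw [hulen]; omega
    rw [List.getD_eq_getElem s 0 hlt1, List.getD_eq_getElem u 0 hlt2]
    simp only [hs_def]
    exact List.getElem_drop
  have hsinc : ∀ t : ℕ, t + 1 < s.length → s.getD t 0 < s.getD (t + 1) 0 := by
    intro t ht
    rw [hslen] at ht
    rw [hsget t (by omega), hsget (t + 1) ht]
    rw [(by omega : j0 + (t + 1) = (j0 + t) + 1)]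
    exact hasc (j0 + t) ((j0 + t) + 1) (by omega) (by omega) (by rw [hulen]; omega)
  have hs0 : s.getD 0 0 = i + 1 := by
    rw [hsget 0 (by omega), (by omega : j0 + 0 = j0), huj0]
  have hlastD : D.getD (D.length - 1) 0 = d (x, x + q.getLast hqne) := by
    have h1 : q.getLast hqne = q[q.length - 1] := List.getLast_eq_getElem hqne
    rw [hDlen, hDval (q.length - 1) (by
      have : 0 < q.length := List.length_pos_iff.mpr hqne
      omega), h1]
  have hDne : D ≠ [] := by rw [hD_def]; simpa using hqne
  have hsne : s ≠ [] := by
    rw [hs_def, ← List.length_pos_iff, List.length_drop, hulen]; omega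
  have hspos : ∀ w ∈ s, 0 < w := fun w hw => hupos w (List.mem_of_mem_drop hw)
  have hthook : IsHookWord (D ++ s) := by
    apply hook_glue2 hDne hsne hDpos hspos hDdec hsinc
    rw [hs0, hlastD]; omega
  have htsub : (D ++ s).Sublist (v ++ u) := by
    apply List.Sublist.append
    · rw [hD_def]
      exact sublist_map_getD v q hq (fun j hj => by rw [hvlen]; exact hqlt j hj)
    · exact List.drop_sublist _ _
  have hlen := hmax.2.2 (D ++ s) htsub hthook
  rw [List.length_append, hDlen, hslen, hulen] at hlen
  omega

lemma core_CL2ind {i : ℕ}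
    (hlasti : d (x, x + q.getLast hqne) = i)
    {js0 : ℕ} (hjs0 : js0 < q.length)
    (hseed : i + 1 ∈ T (x - 1, (x - 1) + js0)) :
    ∀ j, js0 ≤ j → j < q.length → i + 1 ∈ T (x - 1, (x - 1) + j) := by
  intro j hj1 hj2
  induction j, hj1 using Nat.le_induction with
  | base => exact hseed
  | succ j hj ih =>
    have hmem := ih (by omega)
    have hx12 : x - 1 - 1 = x - 2 := by omega
    have hba : lam.getD (x - 1) 0 < lam.getD (x - 2) 0 := lam_strict hlam hx2 hxL
    have hqlen : q.length ≤ lam.getD (x - 1) 0 := q_len_le hlam hT hx2 hxL hd hq hqlt hdec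
    have hSD : InSD lam (x - 1) ((x - 1) + (j + 1)) :=
      ⟨by omega, by omega, by omega, by rw [hx12]; omega⟩
    obtain ⟨β, hβ⟩ := (hT.1 _ _ hSD).1
    have h1 : β ≤ i + 1 := core_CL2step hlam hT hx2 hxL hd hqne hq hqlt hdec
      (by rw [hlasti]) (by omega) hmem hβ
    have h2 : d (x, x + q.getLast hqne) < β := core_CL1 hlam hT hx2 hxL hd hqne hq hqlt hdec
      (by omega : j + 1 < q.length) hβ
    rw [hlasti] at h2
    have : β = i + 1 := by omega
    rwa [← this]

end Core


/-! ### flatMap indexing and split uniqueness -/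

lemma flatMap_index {β γ : Type*} (f : β → List γ) :
    ∀ (B : List β) (p : ℕ), p < (B.flatMap f).length →
    ∃ B1 b B2 k, B = B1 ++ b :: B2 ∧ k < (f b).length ∧
      p = (B1.flatMap f).length + k ∧
      ∀ dflt : γ, (B.flatMap f).getD p dflt = (f b).getD k dflt := by
  intro B
  induction B with
  | nil => intro p hp; simp at hp
  | cons b0 Bt ih =>
    intro p hp
    by_cases h : p < (f b0).length
    · refine ⟨[], b0, Bt, p, rfl, h, by simp, fun dflt => ?_⟩
      rw [List.flatMap_cons, List.getD_append _ _ _ _ h]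
    · push_neg at h
      have hp' : p - (f b0).length < (Bt.flatMap f).length := by
        rw [List.flatMap_cons, List.length_append] at hp
        omega
      obtain ⟨B1, b, B2, k, hB, hk, hpk, hgd⟩ := ih (p - (f b0).length) hp'
      refine ⟨b0 :: B1, b, B2, k, by rw [hB, List.cons_append], hk, ?_, fun dflt => ?_⟩
      · rw [List.flatMap_cons, List.length_append]
        omega
      · rw [List.flatMap_cons, List.getD_append_right _ _ _ _ h]
        exact hgd dflt

lemma split_eq_of_nodup {α : Type*} :
    ∀ {B1 : List α} {P : List α} {b : α} {B2 Q : List α},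
      B1 ++ b :: B2 = P ++ b :: Q → b ∉ B1 → b ∉ P → B1 = P ∧ B2 = Q := by
  intro B1
  induction B1 with
  | nil =>
    intro P b B2 Q heq hb1 hbP
    cases P with
    | nil => simpa using heq
    | cons c P' =>
      exfalso
      simp only [List.nil_append, List.cons_append, List.cons.injEq] at heq
      exact hbP (heq.1 ▸ List.mem_cons_self)
  | cons a B1' ih =>
    intro P b B2 Q heq hb1 hbP
    cases P with
    | nil =>
      exfalso
      simp only [List.cons_append, List.nil_append, List.cons.injEq] at heq
      exact hb1 (heq.1 ▸ List.mem_cons_self)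
    | cons c P' =>
      simp only [List.cons_append, List.cons.injEq] at heq
      have := ih heq.2 (fun h => hb1 (List.mem_cons_of_mem _ h))
        (fun h => hbP (List.mem_cons_of_mem _ h))
      exact ⟨by rw [heq.1, this.1], this.2⟩

/-! ### Counting letters in reading words of box lists -/

def rwordOf (T : ℕ × ℕ → Finset ℕ) (bs : List (ℕ × ℕ)) : List ℕ :=
  bs.flatMap fun b => ((T b).sort (· ≤ ·)).reverse

lemma rwordOf_append (T : ℕ × ℕ → Finset ℕ) (bs1 bs2 : List (ℕ × ℕ)) :
    rwordOf T (bs1 ++ bs2) = rwordOf T bs1 ++ rwordOf T bs2 :=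
  List.flatMap_append

lemma count_box (T : ℕ × ℕ → Finset ℕ) (a : ℕ) (b : ℕ × ℕ) :
    (((T b).sort (· ≤ ·)).reverse).count a = if a ∈ T b then 1 else 0 := by
  rw [List.count_reverse]
  by_cases h : a ∈ T b
  · rw [if_pos h]
    exact List.count_eq_one_of_mem (Finset.sort_nodup _ _) ((Finset.mem_sort _).mpr h)
  · rw [if_neg h]
    exact List.count_eq_zero.mpr (fun hc => h ((Finset.mem_sort _).mp hc))

lemma count_rwordOf (T : ℕ × ℕ → Finset ℕ) (a : ℕ) :
    ∀ bs : List (ℕ × ℕ), (rwordOf T bs).count a = bs.countP (fun b => decide (a ∈ T b)) := by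
  intro bs
  induction bs with
  | nil => simp [rwordOf]
  | cons b bs ih =>
    rw [show rwordOf T (b :: bs) = ((T b).sort (· ≤ ·)).reverse ++ rwordOf T bs from rfl,
        List.count_append, ih, List.countP_cons, count_box]
    by_cases h : a ∈ T b <;> simp [h] <;> omega

lemma count_rwordOf_all (T : ℕ × ℕ → Finset ℕ) (a : ℕ) (bs : List (ℕ × ℕ))
    (h : ∀ b ∈ bs, a ∈ T b) : (rwordOf T bs).count a = bs.length := by
  rw [count_rwordOf]
  exact List.countP_eq_length.mpr (fun b hb => by simpa using h b hb)

lemma count_rwordOf_none (T : ℕ × ℕ → Finset ℕ) (a : ℕ) (bs : List (ℕ × ℕ))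
    (h : ∀ b ∈ bs, a ∉ T b) : (rwordOf T bs).count a = 0 := by
  rw [count_rwordOf]
  exact List.countP_eq_zero.mpr (fun b hb => by simpa using h b hb)

lemma count_rwordOf_pos (T : ℕ × ℕ → Finset ℕ) (a : ℕ) (bs : List (ℕ × ℕ))
    {b : ℕ × ℕ} (hb : b ∈ bs) (ha : a ∈ T b) : 1 ≤ (rwordOf T bs).count a := by
  rw [count_rwordOf]
  exact List.countP_pos_iff.mpr ⟨b, hb, by simpa using ha⟩


/-! ### Structure of `revrowBoxes` -/

def rowB (lam : List ℕ) (r0 : ℕ) : List (ℕ × ℕ) :=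
  (List.range (lam.getD r0 0)).reverse.map fun j => (r0 + 1, r0 + 1 + j)

lemma revrowBoxes_eq (lam : List ℕ) :
    revrowBoxes lam = (List.range lam.length).flatMap (rowB lam) := rfl

lemma rowB_nodup (lam : List ℕ) (r0 : ℕ) : (rowB lam r0).Nodup := by
  apply List.Nodup.map
  · intro a b hab
    simp only [Prod.mk.injEq] at hab
    omega
  · exact List.nodup_reverse.mpr (List.nodup_range)

lemma rowB_fst (lam : List ℕ) (r0 : ℕ) : ∀ b ∈ rowB lam r0, b.1 = r0 + 1 := by
  intro b hb
  simp only [rowB, List.mem_map, List.mem_reverse, List.mem_range] at hb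
  obtain ⟨j, _, rfl⟩ := hb
  rfl

lemma revrowBoxes_nodup (lam : List ℕ) : (revrowBoxes lam).Nodup := by
  rw [revrowBoxes_eq]
  have main : ∀ B : List ℕ, B.Nodup → (B.flatMap (rowB lam)).Nodup := by
    intro B
    induction B with
    | nil => simp
    | cons r Bt ih =>
      intro h
      rw [List.flatMap_cons, List.nodup_append]
      obtain ⟨h1, h2⟩ := List.nodup_cons.mp h
      refine ⟨rowB_nodup lam r, ih h2, ?_⟩
      intro b hb b' hb2 hbb'
      subst hbb'
      obtain ⟨r', hr', hbr'⟩ := List.mem_flatMap.mp hb2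
      have e1 : b.1 = r + 1 := rowB_fst lam r b hb
      have e2 : b.1 = r' + 1 := rowB_fst lam r' b hbr'
      exact h1 (by rw [show r = r' by omega]; exact hr')
  exact main _ (List.nodup_range)

lemma range'_split (s m n : ℕ) (h : m ≤ n) :
    List.range' s n = List.range' s m ++ List.range' (s + m) (n - m) := by
  have h2 := List.range'_append (s := s) (m := m) (n := n - m) (step := 1)
  rw [one_mul, (by omega : m + (n - m) = n)] at h2
  exact h2.symm

/-- Splitting a row of `revrowBoxes` at a distinguished column index `c`,
with an extra split of the right part at `m`. -/
lemma rowB_split3 (lam : List ℕ) {r0 len : ℕ} (m1 m2 : ℕ) (hlen : lam.getD r0 0 = len)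
    (h1 : m1 ≤ m2) (h2 : m2 ≤ len) :
    rowB lam r0 = ((List.range' m2 (len - m2)).reverse.map fun j => (r0+1, r0+1+j))
      ++ ((List.range' m1 (m2 - m1)).reverse.map fun j => (r0+1, r0+1+j))
      ++ ((List.range' 0 m1).reverse.map fun j => (r0+1, r0+1+j)) := by
  rw [rowB, hlen, List.range_eq_range', range'_split 0 m1 len (by omega),
      range'_split (0 + m1) (m2 - m1) (len - m1) (by omega)]
  simp only [(by omega : 0 + m1 = m1), (by omega : m1 + (m2 - m1) = m2),
    (by omega : len - m1 - (m2 - m1) = len - m2)]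
  simp only [List.reverse_append, List.map_append, List.append_assoc]

lemma rowB_split1 (lam : List ℕ) {r0 len c : ℕ} (hlen : lam.getD r0 0 = len)
    (hc : c < len) :
    rowB lam r0 = ((List.range' (c+1) (len - c - 1)).reverse.map fun j => (r0+1, r0+1+j))
      ++ (r0+1, r0+1+c) :: ((List.range' 0 c).reverse.map fun j => (r0+1, r0+1+j)) := by
  have h3 := rowB_split3 lam c (c+1) hlen (by omega) (by omega)
  rw [h3]
  simp only [(by omega : c + 1 - c = 1), List.range'_one, List.reverse_cons,
    List.reverse_nil, List.nil_append, List.map_cons, List.map_nil, List.append_assoc,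
    List.singleton_append, (by omega : len - c - 1 = len - (c+1))]

/-- The canonical split of the reverse reading order at the box `(x, y)`,
with row `x - 1` cut at positions `js0 ≤ N`. -/
lemma boxes_split {lam : List ℕ} {x y : ℕ} (N js0 : ℕ) (hx2 : 2 ≤ x)
    (hxL : x ≤ lam.length) (hxy : x ≤ y) (hyb : y < x + lam.getD (x-1) 0)
    (hjs : js0 ≤ N) (hNa : N ≤ lam.getD (x-2) 0) :
    revrowBoxes lam =
      ((List.range' 0 (x-2)).flatMap (rowB lam)
        ++ (((List.range' N (lam.getD (x-2) 0 - N)).reverse.map fun j => (x-1, (x-1)+j))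
        ++ ((List.range' js0 (N - js0)).reverse.map fun j => (x-1, (x-1)+j))
        ++ ((List.range' 0 js0).reverse.map fun j => (x-1, (x-1)+j))
        ++ ((List.range' (y-x+1) (lam.getD (x-1) 0 - (y-x) - 1)).reverse.map fun j => (x, x+j))))
      ++ (x, y) ::
      (((List.range' 0 (y-x)).reverse.map fun j => (x, x+j))
        ++ ((List.range' x (lam.length - x)).flatMap (rowB lam)) : List (ℕ × ℕ)) := by
  rw [revrowBoxes_eq, List.range_eq_range', range'_split 0 (x-2) lam.length (by omega),
      range'_split (0 + (x-2)) 1 (lam.length - (x-2)) (by omega),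
      range'_split (0 + (x-2) + 1) 1 (lam.length - (x-2) - 1) (by omega)]
  simp only [List.range'_one, List.flatMap_append, List.flatMap_cons, List.flatMap_nil,
    List.append_nil]
  simp only [(by omega : 0 + (x-2) = x - 2), (by omega : 0 + (x-2) + 1 = x - 1),
    (by omega : 0 + (x-2) + 1 + 1 = x),
    (by omega : lam.length - (x-2) - 1 - 1 = lam.length - x)]
  rw [rowB_split3 lam js0 N rfl hjs hNa]
  simp only [(by omega : x - 2 + 1 = x - 1)]
  rw [rowB_split1 lam (r0 := x - 1) (c := y - x) rfl (by omega)]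
  simp only [(by omega : x - 1 + 1 = x), (by omega : x + (y - x) = y)]
  simp only [List.append_assoc, List.cons_append]


/-! ### Locating the distinguished letter in the reading word -/

lemma map_snd_box (T : ℕ × ℕ → Finset ℕ) (b : ℕ × ℕ) :
    (((((T b).sort (· ≤ ·)).reverse).map fun v => (b, v)).map Prod.snd)
      = ((T b).sort (· ≤ ·)).reverse := by
  rw [List.map_map]
  simp

lemma prep {lam : List ℕ} {T : ℕ × ℕ → Finset ℕ} {i : ℕ} {p x y : ℕ}
    (hp0 : p < (revrowWord lam T).length)
    (hpi : (revrowWord lam T).getD p 0 = i)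
    (hxy : ((revrowEntries lam T).getD p ((0, 0), 0)).1 = (x, y)) :
    ∃ B1 B2 k, revrowBoxes lam = B1 ++ (x, y) :: B2 ∧
      k < ((T (x, y)).sort (· ≤ ·)).reverse.length ∧
      ((T (x, y)).sort (· ≤ ·)).reverse.getD k 0 = i ∧
      (revrowWord lam T).take p
        = rwordOf T B1 ++ (((T (x, y)).sort (· ≤ ·)).reverse.take k) := by
  classical
  set f : ℕ × ℕ → List ((ℕ × ℕ) × ℕ) :=
    fun b => (((T b).sort (· ≤ ·)).reverse).map fun v => (b, v) with hf
  have hE : revrowEntries lam T = (revrowBoxes lam).flatMap f := rfl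
  have hlenE : (revrowWord lam T).length = (revrowEntries lam T).length := by
    simp [revrowWord]
  have hpE : p < (revrowEntries lam T).length := by omega
  obtain ⟨B1, b, B2, k, hB, hk, hpk, hgd⟩ :=
    flatMap_index f (revrowBoxes lam) p (by rw [← hE]; exact hpE)
  have hfbl : (f b).length = ((T b).sort (· ≤ ·)).reverse.length := by simp [hf]
  have hkl : k < ((T b).sort (· ≤ ·)).reverse.length := by omega
  have hfb : (f b).getD k ((0,0),0) = (b, ((T b).sort (· ≤ ·)).reverse.getD k 0) := by
    rw [hf]
    rw [List.getD_eq_getElem _ _ (by simpa using hkl), List.getElem_map,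
        List.getD_eq_getElem _ _ hkl]
  have hbxy : b = (x, y) := by
    have := hgd ((0,0),0)
    rw [← hE] at this
    rw [← hxy, this, hfb]
  subst hbxy
  have hsnd : (revrowWord lam T).getD p 0 = ((revrowEntries lam T).getD p ((0,0),0)).2 := by
    have h1 : revrowWord lam T = (revrowEntries lam T).map Prod.snd := rfl
    rw [h1, List.getD_eq_getElem _ _ (by simpa using hpE), List.getElem_map,
        List.getD_eq_getElem _ _ hpE]
  refine ⟨B1, B2, k, hB, hkl, ?_, ?_⟩
  · have := hgd ((0,0),0)
    rw [← hE] at this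
    rw [hsnd, this, hfb] at hpi
    exact hpi
  · have hEsplit : revrowEntries lam T = B1.flatMap f ++ (f (x,y) ++ B2.flatMap f) := by
      rw [hE, hB, List.flatMap_append, List.flatMap_cons]
    have htk : (revrowEntries lam T).take p = B1.flatMap f ++ (f (x,y)).take k := by
      rw [hEsplit, hpk, List.take_append,
          List.take_of_length_le (by omega),
          (by omega : (B1.flatMap f).length + k - (B1.flatMap f).length = k),
          List.take_append,
          (by omega : k - (f (x,y)).length = 0), List.take_zero, List.append_nil]
    have hw : (revrowWord lam T).take p = ((revrowEntries lam T).take p).map Prod.snd := by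
      rw [revrowWord, List.map_take]
    rw [hw, htk, List.map_append]
    congr 1
    · rw [List.map_flatMap]
      unfold rwordOf
      congr 1
      funext b'
      exact map_snd_box T b'
    · rw [List.map_take]
      rw [show List.map Prod.snd (f (x,y)) = ((T (x,y)).sort (· ≤ ·)).reverse
        from map_snd_box T (x,y)]

lemma tk_facts {T : ℕ × ℕ → Finset ℕ} {bx : ℕ × ℕ} {k i : ℕ}
    (hk : k < ((T bx).sort (· ≤ ·)).reverse.length)
    (hvk : ((T bx).sort (· ≤ ·)).reverse.getD k 0 = i) :
    i ∈ T bx ∧ (((T bx).sort (· ≤ ·)).reverse.take k).count i = 0 := by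
  set rev := ((T bx).sort (· ≤ ·)).reverse with hrev
  have hik : rev[k] = i := by rw [← hvk, List.getD_eq_getElem _ _ hk]
  have hmem : i ∈ rev := hik ▸ List.getElem_mem hk
  have hmemT : i ∈ T bx := (Finset.mem_sort _).mp (List.mem_reverse.mp hmem)
  refine ⟨hmemT, ?_⟩
  have h1 : rev.count i = 1 := by
    rw [hrev, count_box]
    exact if_pos hmemT
  have h2 : rev = rev.take k ++ rev.drop k := (List.take_append_drop _ _).symm
  have h3 : rev.drop k = rev[k] :: rev.drop (k+1) := List.drop_eq_getElem_cons hk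
  have h4 : 1 ≤ (rev.drop k).count i := by
    rw [h3, hik, List.count_cons_self]
    omega
  have h5 : rev.count i = (rev.take k).count i + (rev.drop k).count i := by
    conv_lhs => rw [h2]
    exact List.count_append
  omega

/-! ### The common final contradiction -/

lemma caseCore {lam : List ℕ} {T : ℕ × ℕ → Finset ℕ} {i p x y : ℕ}
    (hoc : openCount i ((revrowWord lam T).take p) = 0)
    {B1 B2 : List (ℕ × ℕ)} {k : ℕ}
    (hB : revrowBoxes lam = B1 ++ (x, y) :: B2)
    (htake : (revrowWord lam T).take p
        = rwordOf T B1 ++ (((T (x, y)).sort (· ≤ ·)).reverse.take k))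
    (htki : ((((T (x, y)).sort (· ≤ ·)).reverse.take k)).count i = 0)
    (htki1 : ((((T (x, y)).sort (· ≤ ·)).reverse.take k)).count (i+1) = 0)
    (hx2 : 2 ≤ x) (hxL : x ≤ lam.length) (hxy2 : x ≤ y)
    (hyb : y < x + lam.getD (x-1) 0)
    {N js0 : ℕ} (hjs : js0 ≤ N) (hNa : N ≤ lam.getD (x-2) 0)
    (hF1 : ∀ j, j < N → i ∉ T (x-1, (x-1)+j))
    (hF2 : ∀ j, js0 ≤ j → j < N → i + 1 ∈ T (x-1, (x-1)+j))
    (hnum : (rwordOf T ((List.range' (y-x+1) (lam.getD (x-1) 0 - (y-x) - 1)).reverse.map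
        fun j => (x, x+j))).count i + 1
        ≤ (N - js0) + (rwordOf T ((List.range' (y-x+1) (lam.getD (x-1) 0 - (y-x) - 1)).reverse.map
        fun j => (x, x+j))).count (i+1)) :
    False := by
  classical
  set RowHi : List (ℕ × ℕ) :=
    (List.range' (y-x+1) (lam.getD (x-1) 0 - (y-x) - 1)).reverse.map (fun j => (x, x+j))
    with hRowHi
  set RT1 : List (ℕ × ℕ) :=
    (List.range' js0 (N - js0)).reverse.map (fun j => (x-1, (x-1)+j)) with hRT1
  set RT2 : List (ℕ × ℕ) :=
    (List.range' 0 js0).reverse.map (fun j => (x-1, (x-1)+j)) with hRT2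
  set P0 : List (ℕ × ℕ) :=
    (List.range' 0 (x-2)).flatMap (rowB lam)
      ++ ((List.range' N (lam.getD (x-2) 0 - N)).reverse.map fun j => (x-1, (x-1)+j))
    with hP0
  set Q : List (ℕ × ℕ) :=
    ((List.range' 0 (y-x)).reverse.map fun j => (x, x+j))
      ++ ((List.range' x (lam.length - x)).flatMap (rowB lam)) with hQ
  have hsplit : revrowBoxes lam = (P0 ++ (RT1 ++ RT2 ++ RowHi)) ++ (x, y) :: Q := by
    rw [boxes_split N js0 hx2 hxL hxy2 hyb hjs hNa]
    simp only [hP0, hRT1, hRT2, hRowHi, hQ, List.append_assoc, List.cons_append]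
  have hnd := revrowBoxes_nodup lam
  have hnotB1 : (x, y) ∉ B1 := by
    rw [hB] at hnd
    intro hmem
    exact (List.disjoint_of_nodup_append hnd) hmem (List.mem_cons_self)
  have hnotP : (x, y) ∉ P0 ++ (RT1 ++ RT2 ++ RowHi) := by
    rw [hsplit] at hnd
    intro hmem
    exact (List.disjoint_of_nodup_append hnd) hmem (List.mem_cons_self)
  have hB1 : B1 = P0 ++ (RT1 ++ RT2 ++ RowHi) :=
    (split_eq_of_nodup (hB.symm.trans hsplit) hnotB1 hnotP).1
  -- the suffix
  set tk := (((T (x, y)).sort (· ≤ ·)).reverse.take k) with htk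
  set W1 : List ℕ := rwordOf T RT1 ++ (rwordOf T RT2 ++ (rwordOf T RowHi ++ tk)) with hW1
  have hW : (revrowWord lam T).take p = rwordOf T P0 ++ W1 := by
    rw [htake, hB1]
    simp only [rwordOf_append, hW1, List.append_assoc]
  have hkey := count_le_of_openCount_zero i _ _ (by rw [← hW]; exact hoc)
  have hmemRT : ∀ b : ℕ × ℕ, b ∈ RT1 ++ RT2 → ∃ j, j < N ∧ b = (x-1, (x-1)+j) := by
    intro b hb
    rcases List.mem_append.mp hb with h | h
    · rw [hRT1] at h
      obtain ⟨j, hj, rfl⟩ := List.mem_map.mp h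
      have := List.mem_range'_1.mp (List.mem_reverse.mp hj)
      exact ⟨j, by omega, rfl⟩
    · rw [hRT2] at h
      obtain ⟨j, hj, rfl⟩ := List.mem_map.mp h
      have := List.mem_range'_1.mp (List.mem_reverse.mp hj)
      exact ⟨j, by omega, rfl⟩
  have c1 : W1.count i = (rwordOf T RowHi).count i := by
    rw [hW1]
    rw [List.count_append, List.count_append, List.count_append]
    have z1 : (rwordOf T RT1).count i = 0 := by
      apply count_rwordOf_none
      intro b hb
      obtain ⟨j, hj, rfl⟩ := hmemRT b (List.mem_append.mpr (Or.inl hb))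
      exact hF1 j hj
    have z2 : (rwordOf T RT2).count i = 0 := by
      apply count_rwordOf_none
      intro b hb
      obtain ⟨j, hj, rfl⟩ := hmemRT b (List.mem_append.mpr (Or.inr hb))
      exact hF1 j hj
    rw [z1, z2]
    omega
  have c2 : (N - js0) + (rwordOf T RowHi).count (i+1) ≤ W1.count (i+1) := by
    rw [hW1]
    rw [List.count_append, List.count_append, List.count_append]
    have a1 : (rwordOf T RT1).count (i+1) = N - js0 := by
      rw [count_rwordOf_all]
      · rw [hRT1]
        simp
      · intro b hb
        rw [hRT1] at hb
        obtain ⟨j, hj, rfl⟩ := List.mem_map.mp hb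
        have := List.mem_range'_1.mp (List.mem_reverse.mp hj)
        exact hF2 j (by omega) (by omega)
    omega
  omega


/-! ### The distinguished distributions -/

noncomputable def dA (T : ℕ × ℕ → Finset ℕ) (i x y : ℕ) : ℕ × ℕ → ℕ :=
  fun b => if b.1 = x ∧ (b.2 = y ∨ (y < b.2 ∧ i ∈ T b)) then i else fallb T b

lemma dA_isDist {lam : List ℕ} {T : ℕ × ℕ → Finset ℕ} {i x y : ℕ}
    (hT' : IsSetDecompTab lam T) (hiy : i ∈ T (x, y)) :
    IsDist lam T (dA T i x y) := by
  intro r c h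
  by_cases hc : (r, c).1 = x ∧ ((r, c).2 = y ∨ (y < (r, c).2 ∧ i ∈ T (r, c)))
  · unfold dA
    rw [if_pos hc]
    obtain ⟨h1, h2⟩ := hc
    simp only at h1
    rcases h2 with h2 | h2
    · simp only at h2; subst h1; subst h2; exact hiy
    · exact h2.2
  · unfold dA
    rw [if_neg hc]
    exact fallb_mem (hT'.1 r c h).1

lemma dA_val_y (T : ℕ × ℕ → Finset ℕ) (i x y : ℕ) : dA T i x y (x, y) = i := by
  unfold dA; exact if_pos ⟨rfl, Or.inl rfl⟩

lemma dA_val_hi (T : ℕ × ℕ → Finset ℕ) (i x y : ℕ) {c : ℕ} (hc : y < c)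
    (hic : i ∈ T (x, c)) : dA T i x y (x, c) = i := by
  unfold dA; exact if_pos ⟨rfl, Or.inr ⟨hc, hic⟩⟩

lemma K_eq (T : ℕ × ℕ → Finset ℕ) (i x s n : ℕ) :
    (rwordOf T ((List.range' s n).reverse.map fun j => (x, x+j))).count i
      = ((List.range' s n).filter (fun j => decide (i ∈ T (x, x+j)))).length := by
  rw [count_rwordOf, List.countP_map, List.countP_reverse, List.countP_eq_length_filter]
  rfl

/-! ### Row `x-1` facts for cases (a) and (b) -/

lemma ab_facts {lam : List ℕ} {T : ℕ × ℕ → Finset ℕ} {i x y : ℕ}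
    (hlam : IsStrictPartition lam) (hT' : IsSetDecompTab lam T)
    (hx2 : 2 ≤ x) (hxL : x ≤ lam.length) (hxy2 : x ≤ y)
    (hyb : y < x + lam.getD (x-1) 0) (hiy : i ∈ T (x, y))
    {J : List ℕ} (hJpw : J.Pairwise (· < ·))
    (hJmem : ∀ j ∈ J, y - x + 1 ≤ j ∧ j < lam.getD (x-1) 0 ∧ i ∈ T (x, x+j))
    (hJne : J ≠ []) :
    (∀ j, j < (y-x+1) + J.length → ∀ β ∈ T (x-1, (x-1)+j), i < β) ∧
    (∀ js0, js0 < (y-x+1) + J.length → i + 1 ∈ T (x-1, (x-1)+js0) →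
      ∀ j, js0 ≤ j → j < (y-x+1) + J.length → i + 1 ∈ T (x-1, (x-1)+j)) := by
  classical
  set bb := lam.getD (x-1) 0 with hbb
  have hj0y : y - x < bb := by omega
  set d : ℕ × ℕ → ℕ := dA T i x y with hdd
  have hd : IsDist lam T d := dA_isDist hT' hiy
  have hdy : d (x, x + (y-x)) = i := by
    rw [hdd, (by omega : x + (y-x) = y)]; exact dA_val_y T i x y
  have hdJ : ∀ j ∈ J, d (x, x + j) = i := by
    intro j hj
    obtain ⟨h1, h2, h3⟩ := hJmem j hj
    rw [hdd]; exact dA_val_hi T i x y (by omega) h3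
  set q : List ℕ := List.range' 0 (y-x+1) ++ J with hqdef
  have hqne : q ≠ [] := by
    rw [hqdef]
    intro hcon
    have := congrArg List.length hcon
    simp at this
  have hq : q.Pairwise (· < ·) := by
    rw [hqdef, List.pairwise_append]
    refine ⟨List.pairwise_lt_range', hJpw, ?_⟩
    intro a ha b hb
    have h1 := List.mem_range'_1.mp ha
    have h2 := (hJmem b hb).1
    omega
  have hqlt : ∀ j ∈ q, j < bb := by
    intro j hj
    rw [hqdef] at hj
    rcases List.mem_append.mp hj with h | h
    · have := List.mem_range'_1.mp h; omega
    · exact (hJmem j h).2.1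
  have hqlen : q.length = (y-x+1) + J.length := by rw [hqdef]; simp
  -- the row word of row x and its hook structure
  set v := rowWord lam d x with hvdef
  have hvhook : IsHookWord v := (hT'.2 d hd).1 x (by omega) hxL
  have hvlen : v.length = bb := by rw [hvdef, rowWord_length]
  have hvget : ∀ j, j < bb → v.getD j 0 = d (x, x+j) := by
    intro j hj; rw [hvdef]; exact rowWord_getD lam d x hj
  obtain ⟨jJ, hjJ⟩ := List.exists_mem_of_ne_nil J hJne
  have hge : ∀ s s' : ℕ, s ≤ s' → s' ≤ y - x → v.getD s' 0 ≤ v.getD s 0 := by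
    apply hook_prefix_ge hvhook (s0 := y - x) (t0 := jJ)
      (by have := hJmem jJ hjJ; omega) (by rw [hvlen]; exact (hJmem jJ hjJ).2.1)
    rw [hvget _ (hJmem jJ hjJ).2.1, hvget _ hj0y, hdy, hdJ jJ hjJ]
  have hdec : q.Pairwise (fun j j' => d (x, x + j') ≤ d (x, x + j)) := by
    rw [hqdef, List.pairwise_append]
    refine ⟨?_, ?_, ?_⟩
    · refine (List.pairwise_lt_range').imp_of_mem ?_
      intro a b ha hb hab
      have h1 := List.mem_range'_1.mp ha
      have h2 := List.mem_range'_1.mp hb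
      have := hge a b (by omega) (by omega)
      rwa [hvget a (by omega), hvget b (by omega)] at this
    · refine hJpw.imp_of_mem ?_
      intro a b ha hb _
      rw [hdJ a ha, hdJ b hb]
    · intro a ha b hb
      have h1 := List.mem_range'_1.mp ha
      have h2 := (hJmem b hb)
      have := hge a (y - x) (by omega) (le_refl _)
      rw [hvget a (by omega), hvget (y-x) hj0y, hdy] at this
      rw [hdJ b hb]
      exact this
  have hlastv : d (x, x + q.getLast hqne) = i := by
    have h1 : q.getLast hqne = J.getLast hJne :=
      List.getLast_append_of_ne_nil (l := List.range' 0 (y-x+1)) hqne hJne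
    rw [h1]
    exact hdJ _ (List.getLast_mem hJne)
  constructor
  · intro j hj β hβ
    have := core_CL1 hlam hT' hx2 hxL hd hqne hq hqlt hdec
      (j0 := j) (by omega) hβ
    rwa [hlastv] at this
  · intro js0 hjs0 hseed j hj1 hj2
    exact core_CL2ind hlam hT' hx2 hxL hd hqne hq hqlt hdec hlastv
      (js0 := js0) (by omega) hseed j hj1 (by omega)


/-! ### Row `x-1` facts for case (c) -/

lemma c_facts {lam : List ℕ} {T : ℕ × ℕ → Finset ℕ} {i x y z δ : ℕ}
    (hlam : IsStrictPartition lam) (hT' : IsSetDecompTab lam T)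
    (hx2 : 2 ≤ x) (hxL : x ≤ lam.length) (hxy2 : x ≤ y)
    (hyb : y < x + lam.getD (x-1) 0) (hiy : i ∈ T (x, y))
    (hxz : x ≤ z) (hzy : z < y)
    (hδmem : δ ∈ T (x, z)) (hδ : i + 1 ≤ δ)
    {J : List ℕ} (hJpw : J.Pairwise (· < ·))
    (hJmem : ∀ j ∈ J, y - x + 1 ≤ j ∧ j < lam.getD (x-1) 0 ∧ i ∈ T (x, x+j)) :
    (∀ j, j < (z-x+2) + J.length → ∀ β ∈ T (x-1, (x-1)+j), i < β) ∧
    (∀ js0, js0 < (z-x+2) + J.length → i + 1 ∈ T (x-1, (x-1)+js0) →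
      ∀ j, js0 ≤ j → j < (z-x+2) + J.length → i + 1 ∈ T (x-1, (x-1)+j)) := by
  classical
  set bb := lam.getD (x-1) 0 with hbb
  have hj0y : y - x < bb := by omega
  set d : ℕ × ℕ → ℕ := Function.update (dA T i x y) (x, z) δ with hdd
  have hd : IsDist lam T d := isDist_update (dA_isDist hT' hiy) (fun _ => hδmem)
  have hdz : d (x, x + (z-x)) = δ := by
    rw [hdd, (by omega : x + (z-x) = z)]; exact Function.update_self _ _ _
  have hdy : d (x, x + (y-x)) = i := by
    rw [hdd, (by omega : x + (y-x) = y),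
        Function.update_of_ne (by simp only [ne_eq, Prod.mk.injEq]; omega)]
    exact dA_val_y T i x y
  have hdJ : ∀ j ∈ J, d (x, x + j) = i := by
    intro j hj
    obtain ⟨h1, h2, h3⟩ := hJmem j hj
    rw [hdd, Function.update_of_ne (by simp only [ne_eq, Prod.mk.injEq]; omega)]
    exact dA_val_hi T i x y (by omega) h3
  set q : List ℕ := List.range' 0 (z-x+1) ++ ((y-x) :: J) with hqdef
  have hqne : q ≠ [] := by
    rw [hqdef]
    intro hcon
    have := congrArg List.length hcon
    simp at this
  have hconsPW : ((y-x) :: J).Pairwise (· < ·) := by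
    rw [List.pairwise_cons]
    exact ⟨fun b hb => by have := (hJmem b hb).1; omega, hJpw⟩
  have hq : q.Pairwise (· < ·) := by
    rw [hqdef, List.pairwise_append]
    refine ⟨List.pairwise_lt_range', hconsPW, ?_⟩
    · intro a ha b hb
      have h1 := List.mem_range'_1.mp ha
      rcases List.mem_cons.mp hb with h | h
      · omega
      · have := (hJmem b h).1; omega
  have hqlt : ∀ j ∈ q, j < bb := by
    intro j hj
    rw [hqdef] at hj
    rcases List.mem_append.mp hj with h | h
    · have := List.mem_range'_1.mp h; omega
    · rcases List.mem_cons.mp h with h | h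
      · omega
      · exact (hJmem j h).2.1
  have hqlen : q.length = (z-x+2) + J.length := by rw [hqdef]; simp; omega
  set v := rowWord lam d x with hvdef
  have hvhook : IsHookWord v := (hT'.2 d hd).1 x (by omega) hxL
  have hvlen : v.length = bb := by rw [hvdef, rowWord_length]
  have hvget : ∀ j, j < bb → v.getD j 0 = d (x, x+j) := by
    intro j hj; rw [hvdef]; exact rowWord_getD lam d x hj
  have hge : ∀ s s' : ℕ, s ≤ s' → s' ≤ z - x → v.getD s' 0 ≤ v.getD s 0 := by
    apply hook_prefix_ge hvhook (s0 := z - x) (t0 := y - x)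
      (by omega) (by rw [hvlen]; omega)
    rw [hvget _ hj0y, hvget _ (by omega), hdy, hdz]
    omega
  have hdec : q.Pairwise (fun j j' => d (x, x + j') ≤ d (x, x + j)) := by
    have hval : ∀ b ∈ (y-x) :: J, d (x, x + b) = i := by
      intro b hb
      rcases List.mem_cons.mp hb with h | h
      · rw [h]; exact hdy
      · exact hdJ b h
    rw [hqdef, List.pairwise_append]
    refine ⟨?_, ?_, ?_⟩
    · refine (List.pairwise_lt_range').imp_of_mem ?_
      intro a b ha hb hab
      have h1 := List.mem_range'_1.mp ha
      have h2 := List.mem_range'_1.mp hb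
      have := hge a b (by omega) (by omega)
      rwa [hvget a (by omega), hvget b (by omega)] at this
    · refine hconsPW.imp_of_mem ?_
      intro a b ha hb _
      rw [hval a ha, hval b hb]
    · intro a ha b hb
      have h1 := List.mem_range'_1.mp ha
      have := hge a (z - x) (by omega) (le_refl _)
      rw [hvget a (by omega), hvget (z-x) (by omega), hdz] at this
      rw [hval b hb]
      omega
  have hlastv : d (x, x + q.getLast hqne) = i := by
    have h1 : q.getLast hqne = ((y-x) :: J).getLast (List.cons_ne_nil _ _) :=
      List.getLast_append_of_ne_nil (l := List.range' 0 (z-x+1)) hqne (List.cons_ne_nil _ _)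
    rw [h1]
    have hm := List.getLast_mem (l := (y-x) :: J) (List.cons_ne_nil _ _)
    rcases List.mem_cons.mp hm with h | h
    · rw [h]; exact hdy
    · exact hdJ _ h
  constructor
  · intro j hj β hβ
    have := core_CL1 hlam hT' hx2 hxL hd hqne hq hqlt hdec
      (j0 := j) (by omega) hβ
    rwa [hlastv] at this
  · intro js0 hjs0 hseed j hj1 hj2
    exact core_CL2ind hlam hT' hx2 hxL hd hqne hq hqlt hdec hlastv
      (js0 := js0) (by omega) hseed j hj1 (by omega)

/-! ### The immediate contradiction when `i+1` is in the same box -/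

lemma immediate {lam : List ℕ} {T : ℕ × ℕ → Finset ℕ} {i p x y k : ℕ}
    {B1 : List (ℕ × ℕ)}
    (hoc : openCount i ((revrowWord lam T).take p) = 0)
    (htake : (revrowWord lam T).take p
        = rwordOf T B1 ++ (((T (x,y)).sort (· ≤ ·)).reverse.take k))
    (hk : k < ((T (x,y)).sort (· ≤ ·)).reverse.length)
    (hvk : ((T (x,y)).sort (· ≤ ·)).reverse.getD k 0 = i)
    (htki : ((((T (x,y)).sort (· ≤ ·)).reverse.take k)).count i = 0)
    (hip1 : i + 1 ∈ T (x,y)) : False := by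
  classical
  set rev := ((T (x,y)).sort (· ≤ ·)).reverse with hrev
  have hpw : rev.Pairwise (fun a c => c < a) :=
    List.pairwise_reverse.mpr (Finset.sortedLT_sort _).pairwise
  have hmem : i + 1 ∈ rev := List.mem_reverse.mpr ((Finset.mem_sort _).mpr hip1)
  obtain ⟨k2, hk2, hk2v⟩ := List.getElem_of_mem hmem
  have hik : rev[k] = i := by rw [← hvk]; exact (List.getD_eq_getElem _ _ hk).symm
  have hk2k : k2 < k := by
    rcases lt_trichotomy k2 k with h | h | h
    · exact h
    · exfalso; subst h; rw [hik] at hk2v; omega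
    · exfalso
      have := List.pairwise_iff_getElem.mp hpw k k2 hk hk2 h
      rw [hik, hk2v] at this
      omega
  have hlt : k2 < (rev.take k).length := by
    rw [List.length_take]; omega
  have hhead : (rev.take k)[k2] = i + 1 := by
    rw [List.getElem_take]; exact hk2v
  have hdrop : (rev.take k).drop k2 = (i+1) :: (rev.take k).drop (k2+1) := by
    rw [List.drop_eq_getElem_cons hlt, hhead]
  have hW : (revrowWord lam T).take p
      = (rwordOf T B1 ++ (rev.take k).take k2) ++ ((rev.take k).drop k2) := by
    rw [htake, List.append_assoc, List.take_append_drop]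
  have hkey := count_le_of_openCount_zero i _ _ (by rw [← hW]; exact hoc)
  have c1 : ((rev.take k).drop k2).count i = 0 := by
    have := (List.drop_sublist k2 (rev.take k)).count_le i
    omega
  have c2 : 1 ≤ ((rev.take k).drop k2).count (i+1) := by
    rw [hdrop, List.count_cons_self]
    omega
  omega

lemma mem_revrowBoxes_InSD {lam : List ℕ} {b : ℕ × ℕ}
    (hb : b ∈ revrowBoxes lam) : InSD lam b.1 b.2 := by
  rw [revrowBoxes_eq] at hb
  obtain ⟨r0, hr0, hb⟩ := List.mem_flatMap.mp hb
  simp only [rowB, List.mem_map, List.mem_reverse, List.mem_range] at hb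
  obtain ⟨j, hj, rfl⟩ := hb
  refine ⟨by omega, by simp only [List.mem_range] at hr0; omega, by omega, ?_⟩
  rw [(by omega : r0 + 1 - 1 = r0)]
  omega


/-! ### The three excluded configurations -/

lemma caseA {lam : List ℕ} {T : ℕ × ℕ → Finset ℕ} {i p x y : ℕ}
    (hlam : IsStrictPartition lam) (hT' : IsSetDecompTab lam T)
    (hoc : openCount i ((revrowWord lam T).take p) = 0)
    {B1 B2 : List (ℕ × ℕ)} {k : ℕ}
    (hB : revrowBoxes lam = B1 ++ (x, y) :: B2)
    (htake : (revrowWord lam T).take p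
        = rwordOf T B1 ++ (((T (x, y)).sort (· ≤ ·)).reverse.take k))
    (htki : ((((T (x, y)).sort (· ≤ ·)).reverse.take k)).count i = 0)
    (htki1 : ((((T (x, y)).sort (· ≤ ·)).reverse.take k)).count (i+1) = 0)
    (hx2 : 2 ≤ x) (hxL : x ≤ lam.length) (hxy2 : x ≤ y)
    (hyb : y < x + lam.getD (x-1) 0) (hiy : i ∈ T (x, y))
    (hseed : i + 1 ∈ T (x - 1, x - 1)) : False := by
  classical
  have hba : lam.getD (x-1) 0 < lam.getD (x-2) 0 := lam_strict hlam hx2 hxL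
  set J : List ℕ := (List.range' (y-x+1) (lam.getD (x-1) 0 - (y-x) - 1)).filter
      (fun j => decide (i ∈ T (x, x+j))) with hJdef
  have hJmem : ∀ j ∈ J, y - x + 1 ≤ j ∧ j < lam.getD (x-1) 0 ∧ i ∈ T (x, x+j) := by
    intro j hj
    rw [hJdef, List.mem_filter] at hj
    have h1 := List.mem_range'_1.mp hj.1
    exact ⟨by omega, by omega, by simpa using hj.2⟩
  have hJpw : J.Pairwise (· < ·) := List.Pairwise.filter _ (List.pairwise_lt_range')
  have hJlen : J.length ≤ lam.getD (x-1) 0 - (y-x) - 1 := by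
    rw [hJdef]
    exact le_trans (List.length_filter_le _ _) (le_of_eq (List.length_range'))
  have hK : (rwordOf T ((List.range' (y-x+1) (lam.getD (x-1) 0 - (y-x) - 1)).reverse.map
      fun j => (x, x+j))).count i = J.length := K_eq T i x _ _
  have hseed0 : i + 1 ∈ T (x-1, (x-1) + 0) := by
    rw [Nat.add_zero]; exact hseed
  by_cases hJne : J = []
  · have hd : IsDist lam T (dA T i x y) := dA_isDist hT' hiy
    have hlastv : dA T i x y (x, x + ([y-x] : List ℕ).getLast (by simp)) = i := by
      simp only [List.getLast_singleton]
      rw [(by omega : x + (y-x) = y)]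
      exact dA_val_y T i x y
    have hF1 : ∀ j, j < 1 → i ∉ T (x-1, (x-1)+j) := by
      intro j hj hmem
      have := core_CL1 hlam hT' hx2 hxL hd (q := [y-x]) (by simp)
        (List.pairwise_singleton _ _) (by intro j' hj'; simp at hj'; omega)
        (List.pairwise_singleton _ _) (j0 := j) (by simpa using hj) hmem
      rw [hlastv] at this
      omega
    refine caseCore hoc hB htake htki htki1 hx2 hxL hxy2 hyb
      (N := 1) (js0 := 0) (by omega) (by omega) hF1
      (fun j _ hj2 => by rw [(by omega : j = 0)]; exact hseed0) ?_
    rw [hK, show J.length = 0 from by rw [hJne]; rfl]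
    omega
  · obtain ⟨hF1, hF2⟩ := ab_facts hlam hT' hx2 hxL hxy2 hyb hiy hJpw hJmem hJne
    refine caseCore hoc hB htake htki htki1 hx2 hxL hxy2 hyb
      (N := (y-x+1) + J.length) (js0 := 0) (by omega) (by omega)
      (fun j hj hmem => by have := hF1 j hj i hmem; omega)
      (fun j hj1 hj2 => hF2 0 (by omega) hseed0 j hj1 hj2) ?_
    rw [hK]
    omega

lemma caseB {lam : List ℕ} {T : ℕ × ℕ → Finset ℕ} {i p x y z : ℕ}
    (hlam : IsStrictPartition lam) (hT' : IsSetDecompTab lam T)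
    (hoc : openCount i ((revrowWord lam T).take p) = 0)
    {B1 B2 : List (ℕ × ℕ)} {k : ℕ}
    (hB : revrowBoxes lam = B1 ++ (x, y) :: B2)
    (htake : (revrowWord lam T).take p
        = rwordOf T B1 ++ (((T (x, y)).sort (· ≤ ·)).reverse.take k))
    (htki : ((((T (x, y)).sort (· ≤ ·)).reverse.take k)).count i = 0)
    (htki1 : ((((T (x, y)).sort (· ≤ ·)).reverse.take k)).count (i+1) = 0)
    (hx2 : 2 ≤ x) (hxL : x ≤ lam.length) (hxy2 : x ≤ y)
    (hyb : y < x + lam.getD (x-1) 0) (hiy : i ∈ T (x, y))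
    (hz : y < z) (hSDxy1 : InSD lam (x-1) y) (hSDz : InSD lam x z)
    (hminle : (T (x - 1, y)).min ≤ ((i + 1 : ℕ) : WithTop ℕ))
    (hzmem : i + 1 ∈ T (x, z)) : False := by
  classical
  have hba : lam.getD (x-1) 0 < lam.getD (x-2) 0 := lam_strict hlam hx2 hxL
  have hzb : z < x + lam.getD (x-1) 0 := hSDz.2.2.2
  set J : List ℕ := (List.range' (y-x+1) (lam.getD (x-1) 0 - (y-x) - 1)).filter
      (fun j => decide (i ∈ T (x, x+j))) with hJdef
  have hJmem : ∀ j ∈ J, y - x + 1 ≤ j ∧ j < lam.getD (x-1) 0 ∧ i ∈ T (x, x+j) := by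
    intro j hj
    rw [hJdef, List.mem_filter] at hj
    have h1 := List.mem_range'_1.mp hj.1
    exact ⟨by omega, by omega, by simpa using hj.2⟩
  have hJpw : J.Pairwise (· < ·) := List.Pairwise.filter _ (List.pairwise_lt_range')
  have hJlen : J.length ≤ lam.getD (x-1) 0 - (y-x) - 1 := by
    rw [hJdef]
    exact le_trans (List.length_filter_le _ _) (le_of_eq (List.length_range'))
  have hK : (rwordOf T ((List.range' (y-x+1) (lam.getD (x-1) 0 - (y-x) - 1)).reverse.map
      fun j => (x, x+j))).count i = J.length := K_eq T i x _ _
  have hzRowHi : (x, z) ∈ (List.range' (y-x+1) (lam.getD (x-1) 0 - (y-x) - 1)).reverse.map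
      (fun j => (x, x+j)) := by
    refine List.mem_map.mpr ⟨z - x, List.mem_reverse.mpr
      (List.mem_range'_1.mpr ⟨by omega, by omega⟩), ?_⟩
    rw [(by omega : x + (z-x) = z)]
  have hbonus : 1 ≤ (rwordOf T ((List.range' (y-x+1) (lam.getD (x-1) 0 - (y-x) - 1)).reverse.map
      fun j => (x, x+j))).count (i+1) :=
    count_rwordOf_pos T (i+1) _ hzRowHi hzmem
  by_cases hJne : J = []
  · refine caseCore hoc hB htake htki htki1 hx2 hxL hxy2 hyb
      (N := 0) (js0 := 0) (by omega) (by omega)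
      (fun j hj => by omega) (fun j hj1 hj2 => by omega) ?_
    rw [hK, show J.length = 0 from by rw [hJne]; rfl]
    omega
  · obtain ⟨hF1, hF2⟩ := ab_facts hlam hT' hx2 hxL hxy2 hyb hiy hJpw hJmem hJne
    have hJlen1 : 1 ≤ J.length := List.length_pos_iff.mpr hJne
    have hne1 : (T (x-1, y)).Nonempty := (hT'.1 _ _ hSDxy1).1
    have hβle : (T (x-1, y)).min' hne1 ≤ i + 1 := by
      have h1 : ((T (x-1, y)).min' hne1 : WithTop ℕ) = (T (x-1, y)).min :=
        Finset.coe_min' hne1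
      have h2 : ((T (x-1, y)).min' hne1 : WithTop ℕ) ≤ ((i+1 : ℕ) : WithTop ℕ) := by
        rw [h1]; exact hminle
      exact_mod_cast h2
    have hseedy : i + 1 ∈ T (x-1, (x-1) + (y-x+1)) := by
      have hβmem : (T (x-1, y)).min' hne1 ∈ T (x-1, (x-1) + (y-x+1)) := by
        rw [(by omega : (x-1) + (y-x+1) = y)]
        exact Finset.min'_mem _ hne1
      have hgt := hF1 (y-x+1) (by omega) _ hβmem
      have : (T (x-1, y)).min' hne1 = i + 1 := by omega
      rwa [this] at hβmem
    refine caseCore hoc hB htake htki htki1 hx2 hxL hxy2 hyb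
      (N := (y-x+1) + J.length) (js0 := y-x+1) (by omega) (by omega)
      (fun j hj hmem => by have := hF1 j hj i hmem; omega)
      (fun j hj1 hj2 => hF2 (y-x+1) (by omega) hseedy j hj1 hj2) ?_
    rw [hK]
    omega

lemma caseC {lam : List ℕ} {T : ℕ × ℕ → Finset ℕ} {i p x y z : ℕ}
    (hlam : IsStrictPartition lam) (hT' : IsSetDecompTab lam T)
    (hoc : openCount i ((revrowWord lam T).take p) = 0)
    {B1 B2 : List (ℕ × ℕ)} {k : ℕ}
    (hB : revrowBoxes lam = B1 ++ (x, y) :: B2)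
    (htake : (revrowWord lam T).take p
        = rwordOf T B1 ++ (((T (x, y)).sort (· ≤ ·)).reverse.take k))
    (htki : ((((T (x, y)).sort (· ≤ ·)).reverse.take k)).count i = 0)
    (htki1 : ((((T (x, y)).sort (· ≤ ·)).reverse.take k)).count (i+1) = 0)
    (hx2 : 2 ≤ x) (hxL : x ≤ lam.length) (hxy2 : x ≤ y)
    (hyb : y < x + lam.getD (x-1) 0) (hiy : i ∈ T (x, y))
    (hzy : z < y) (hSDxz : InSD lam x z) (hSDx1z : InSD lam (x-1) z)
    (hmaxge : ((i + 1 : ℕ) : WithBot ℕ) ≤ (T (x, z)).max)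
    (hzmem : i + 1 ∈ T (x - 1, z)) : False := by
  classical
  have hba : lam.getD (x-1) 0 < lam.getD (x-2) 0 := lam_strict hlam hx2 hxL
  have hxz : x ≤ z := hSDxz.2.2.1
  have hne1 : (T (x, z)).Nonempty := (hT'.1 _ _ hSDxz).1
  have hδ : i + 1 ≤ (T (x, z)).max' hne1 := by
    have h1 : ((T (x, z)).max' hne1 : WithBot ℕ) = (T (x, z)).max :=
      Finset.coe_max' hne1
    have h2 : ((i+1 : ℕ) : WithBot ℕ) ≤ ((T (x, z)).max' hne1 : WithBot ℕ) := by
      rw [h1]; exact hmaxge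
    exact_mod_cast h2
  set J : List ℕ := (List.range' (y-x+1) (lam.getD (x-1) 0 - (y-x) - 1)).filter
      (fun j => decide (i ∈ T (x, x+j))) with hJdef
  have hJmem : ∀ j ∈ J, y - x + 1 ≤ j ∧ j < lam.getD (x-1) 0 ∧ i ∈ T (x, x+j) := by
    intro j hj
    rw [hJdef, List.mem_filter] at hj
    have h1 := List.mem_range'_1.mp hj.1
    exact ⟨by omega, by omega, by simpa using hj.2⟩
  have hJpw : J.Pairwise (· < ·) := List.Pairwise.filter _ (List.pairwise_lt_range')
  have hJlen : J.length ≤ lam.getD (x-1) 0 - (y-x) - 1 := by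
    rw [hJdef]
    exact le_trans (List.length_filter_le _ _) (le_of_eq (List.length_range'))
  have hK : (rwordOf T ((List.range' (y-x+1) (lam.getD (x-1) 0 - (y-x) - 1)).reverse.map
      fun j => (x, x+j))).count i = J.length := K_eq T i x _ _
  obtain ⟨hF1, hF2⟩ := c_facts hlam hT' hx2 hxL hxy2 hyb hiy hxz hzy
    (Finset.max'_mem _ hne1) hδ hJpw hJmem
  have hseedjs : i + 1 ∈ T (x-1, (x-1) + (z-x+1)) := by
    rw [(by omega : (x-1) + (z-x+1) = z)]
    exact hzmem
  refine caseCore hoc hB htake htki htki1 hx2 hxL hxy2 hyb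
    (N := (z-x+2) + J.length) (js0 := z-x+1) (by omega) (by omega)
    (fun j hj hmem => by have := hF1 j hj i hmem; omega)
    (fun j hj1 hj2 => hF2 (z-x+1) (by omega) hseedjs j hj1 hj2) ?_
  rw [hK]
  omega

end Stmt5Aux

/-- Lemma 4.2(1) of the paper: exclusion of configurations around the
box `(x,y)` of the last `i`-unpaired letter equal to `i`, when changing that `i` to
`i+1` fails to give a set-valued decomposition tableau. -/

theorem stmt5 (n : ℕ) (hn : 1 ≤ n) (lam : List ℕ) (hlam : IsStrictPartition lam)
    (hlen : lam.length ≤ n) (i : ℕ) (hi1 : 1 ≤ i) (hi2 : i < n)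
    (T : ℕ × ℕ → Finset ℕ) (hT : IsSetDecompTabN n lam T)
    (p : ℕ) (hp : UnpairedLow i (revrowWord lam T) p)
    (hlast : ∀ q, UnpairedLow i (revrowWord lam T) q → q ≤ p)
    (x y : ℕ) (hxy : ((revrowEntries lam T).getD p ((0, 0), 0)).1 = (x, y))
    (hfail : ¬ IsSetDecompTab lam
      (Function.update T (x, y) (insert (i + 1) ((T (x, y)).erase i)))) :
    ¬ (1 < x ∧ x ≤ y ∧ InSD lam (x - 1) (x - 1) ∧ i + 1 ∈ T (x - 1, x - 1)) ∧
    ¬ (1 < x ∧ x ≤ y ∧ ∃ z, y < z ∧ InSD lam (x - 1) y ∧ InSD lam x z ∧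
        (T (x - 1, y)).min ≤ ((i + 1 : ℕ) : WithTop ℕ) ∧ i + 1 ∈ T (x, z)) ∧
    ¬ (1 < x ∧ x < y ∧ ∃ z, 1 < z ∧ z < y ∧ InSD lam x z ∧ InSD lam (x - 1) z ∧
        ((i + 1 : ℕ) : WithBot ℕ) ≤ (T (x, z)).max ∧ i + 1 ∈ T (x - 1, z)) := by
  classical
  obtain ⟨hp0, hpi, hoc⟩ := hp
  have hT' := hT.1
  obtain ⟨B1, B2, k, hB, hk, hvk, htake⟩ := Stmt5Aux.prep hp0 hpi hxy
  obtain ⟨hiy, htki⟩ := Stmt5Aux.tk_facts hk hvk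
  have hbox : InSD lam x y := by
    apply Stmt5Aux.mem_revrowBoxes_InSD (b := (x, y))
    rw [hB]
    exact List.mem_append.mpr (Or.inr (List.mem_cons_self))
  obtain ⟨hx1', hxL, hxy2, hyb⟩ := hbox
  refine ⟨?_, ?_, ?_⟩
  · rintro ⟨hx1, hxy', hSDd, hseedA⟩
    by_cases hip1 : i + 1 ∈ T (x, y)
    · exact Stmt5Aux.immediate hoc htake hk hvk htki hip1
    · have htki1 : ((((T (x, y)).sort (· ≤ ·)).reverse.take k)).count (i+1) = 0 := by
        have h0 : (((T (x, y)).sort (· ≤ ·)).reverse).count (i+1) = 0 := by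
          rw [Stmt5Aux.count_box]; exact if_neg hip1
        have := (List.take_sublist k (((T (x, y)).sort (· ≤ ·)).reverse)).count_le (i+1)
        omega
      exact Stmt5Aux.caseA hlam hT' hoc hB htake htki htki1 (by omega) hxL hxy2 hyb hiy hseedA
  · rintro ⟨hx1, hxy', z, hz, hSD1, hSD2, hminle, hz2⟩
    by_cases hip1 : i + 1 ∈ T (x, y)
    · exact Stmt5Aux.immediate hoc htake hk hvk htki hip1
    · have htki1 : ((((T (x, y)).sort (· ≤ ·)).reverse.take k)).count (i+1) = 0 := by
        have h0 : (((T (x, y)).sort (· ≤ ·)).reverse).count (i+1) = 0 := by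
          rw [Stmt5Aux.count_box]; exact if_neg hip1
        have := (List.take_sublist k (((T (x, y)).sort (· ≤ ·)).reverse)).count_le (i+1)
        omega
      exact Stmt5Aux.caseB hlam hT' hoc hB htake htki htki1 (by omega) hxL hxy2 hyb hiy
        hz hSD1 hSD2 hminle hz2
  · rintro ⟨hx1, hxy', z, hz1, hzy, hSD1, hSD2, hmaxge, hz2⟩
    by_cases hip1 : i + 1 ∈ T (x, y)
    · exact Stmt5Aux.immediate hoc htake hk hvk htki hip1
    · have htki1 : ((((T (x, y)).sort (· ≤ ·)).reverse.take k)).count (i+1) = 0 := by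
        have h0 : (((T (x, y)).sort (· ≤ ·)).reverse).count (i+1) = 0 := by
          rw [Stmt5Aux.count_box]; exact if_neg hip1
        have := (List.take_sublist k (((T (x, y)).sort (· ≤ ·)).reverse)).count_le (i+1)
        omega
      exact Stmt5Aux.caseC hlam hT' hoc hB htake htki htki1 (by omega) hxL (by omega) hyb hiy
        hzy hSD1 hSD2 hmaxge hz2
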